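/- Let L := W_2(ℓ^2) W_3(ℓ^3) ⋯ W_s(ℓ^s), where W_i(ℓ^i) := L_n(ℓ^i_1) L_{n−1}(ℓ^i_2) ⋯ L_i(ℓ^i_{n−i+1}) with all multipliers positive, and let A := L D L^T for a positive diagonal matrix D. Then A is oscillatory and its exponent is r(A) = ⌈(n−1)/(s−1)⌉. -/

import Mathlib

/-- A square real matrix is totally nonnegative if all its minors are nonnegative. -/
def TotallyNonneg {n : ℕ} (A : Matrix (Fin n) (Fin n) ℝ) : Prop :=
  ∀ (k : ℕ) (r c : Fin k → Fin n), StrictMono r → StrictMono c →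
    0 ≤ (A.submatrix r c).det

/-- A square real matrix is totally positive if all its minors are positive. -/
def TotallyPos {n : ℕ} (A : Matrix (Fin n) (Fin n) ℝ) : Prop :=
  ∀ (k : ℕ) (r c : Fin k → Fin n), StrictMono r → StrictMono c →
    0 < (A.submatrix r c).det

/-- The lower elementary bidiagonal matrix L_i(q) = I + q·E_{i,i−1} (1-indexed i). -/
def Lmat (n i : ℕ) (q : ℝ) : Matrix (Fin n) (Fin n) ℝ :=
  1 + Matrix.of fun a b : Fin n => if a.val + 1 = i ∧ b.val + 2 = i then q else 0

/-- W_i(v) := L_n(v 0) · L_{n−1}(v 1) ⋯ L_i(v (n−i)). -/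
def Wmat (n i : ℕ) (v : ℕ → ℝ) : Matrix (Fin n) (Fin n) ℝ :=
  (List.ofFn fun j : Fin (n - i + 1) => Lmat n (n - j.val) (v j.val)).prod

namespace Osc

variable {n : ℕ}

inductive Atom (n : ℕ) where
  | low (i : ℕ) (q : ℝ)
  | up (i : ℕ) (q : ℝ)
  | dg (d : Fin n → ℝ)

def Atom.mat : Atom n → Matrix (Fin n) (Fin n) ℝ
  | .low i q => Lmat n i q
  | .up i q => (Lmat n i q).transpose
  | .dg d => Matrix.diagonal d

def Atom.Pos : Atom n → Prop
  | .low i q => 0 < q ∧ 2 ≤ i ∧ i ≤ n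
  | .up i q => 0 < q ∧ 2 ≤ i ∧ i ≤ n
  | .dg d => ∀ x, 0 < d x

def wprod (w : List (Atom n)) : Matrix (Fin n) (Fin n) ℝ := (w.map Atom.mat).prod

@[simp] lemma wprod_nil : wprod ([] : List (Atom n)) = 1 := rfl

@[simp] lemma wprod_cons (a : Atom n) (w : List (Atom n)) :
    wprod (a :: w) = a.mat * wprod w := by
  simp [wprod]

lemma wprod_append (w₁ w₂ : List (Atom n)) :
    wprod (w₁ ++ w₂) = wprod w₁ * wprod w₂ := by
  simp [wprod]

/-- Minor of a matrix given by row/column subsets. -/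
def minor (A : Matrix (Fin n) (Fin n) ℝ) {k : ℕ} (S T : Finset (Fin n))
    (hS : S.card = k) (hT : T.card = k) : ℝ :=
  (A.submatrix (S.orderEmbOfFin hS) (T.orderEmbOfFin hT)).det

/-- One-step reachability moves for row sets along a word, reading from the left. -/
inductive Reach : List (Atom n) → Finset (Fin n) → Finset (Fin n) → Prop
  | nil (S) : Reach [] S S
  | skip {w S T} (a) : Reach w S T → Reach (a :: w) S T
  | low {w S T i q} (x₀ x₁ : Fin n) (h₀ : (x₀ : ℕ) + 1 = i) (h₁ : (x₁ : ℕ) + 2 = i)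
      (hm : x₀ ∈ S) (hn : x₁ ∉ S) :
      Reach w (insert x₁ (S.erase x₀)) T → Reach (.low i q :: w) S T
  | up {w S T i q} (x₀ x₁ : Fin n) (h₀ : (x₀ : ℕ) + 1 = i) (h₁ : (x₁ : ℕ) + 2 = i)
      (hm : x₁ ∈ S) (hn : x₀ ∉ S) :
      Reach w (insert x₀ (S.erase x₁)) T → Reach (.up i q :: w) S T

lemma Reach.refl (w : List (Atom n)) (S : Finset (Fin n)) : Reach w S S := by
  induction w with
  | nil => exact .nil S
  | cons a w ih => exact .skip a ih

lemma Reach.append {w₁ w₂ : List (Atom n)} {S M T : Finset (Fin n)}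
    (h₁ : Reach w₁ S M) (h₂ : Reach w₂ M T) : Reach (w₁ ++ w₂) S T := by
  induction h₁ with
  | nil => exact h₂
  | skip a _ ih => exact .skip a (ih h₂)
  | low x₀ x₁ h₀ h₁' hm hn _ ih => exact .low x₀ x₁ h₀ h₁' hm hn (ih h₂)
  | up x₀ x₁ h₀ h₁' hm hn _ ih => exact .up x₀ x₁ h₀ h₁' hm hn (ih h₂)

lemma Reach.append_inv {w₁ w₂ : List (Atom n)} {S T : Finset (Fin n)}
    (h : Reach (w₁ ++ w₂) S T) : ∃ M, Reach w₁ S M ∧ Reach w₂ M T := by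
  induction w₁ generalizing S with
  | nil => exact ⟨S, .nil S, h⟩
  | cons a w ih =>
    cases h with
    | skip _ h' => obtain ⟨M, hM1, hM2⟩ := ih h'; exact ⟨M, .skip a hM1, hM2⟩
    | low x₀ x₁ h₀ h₁ hm hn h' =>
      obtain ⟨M, hM1, hM2⟩ := ih h'; exact ⟨M, .low x₀ x₁ h₀ h₁ hm hn hM1, hM2⟩
    | up x₀ x₁ h₀ h₁ hm hn h' =>
      obtain ⟨M, hM1, hM2⟩ := ih h'; exact ⟨M, .up x₀ x₁ h₀ h₁ hm hn hM1, hM2⟩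

lemma card_move {S : Finset (Fin n)} {x₀ x₁ : Fin n} (hm : x₀ ∈ S) (hn : x₁ ∉ S) :
    (insert x₁ (S.erase x₀)).card = S.card := by
  rw [Finset.card_insert_of_notMem (fun h => hn (Finset.mem_of_mem_erase h)),
    Finset.card_erase_of_mem hm]
  have : 1 ≤ S.card := Finset.card_pos.mpr ⟨x₀, hm⟩
  omega

lemma Reach.card_eq {w : List (Atom n)} {S T : Finset (Fin n)} (h : Reach w S T) :
    S.card = T.card := by
  induction h with
  | nil => rfl
  | skip _ _ ih => exact ih
  | low x₀ x₁ h₀ h₁ hm hn _ ih => rw [← ih, card_move hm hn]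
  | up x₀ x₁ h₀ h₁ hm hn _ ih => rw [← ih, card_move hm hn]

/-! ### Multiplication by an atom as a row operation -/

lemma low_mul {i : ℕ} {q : ℝ} (x₀ x₁ : Fin n) (h₀ : (x₀ : ℕ) + 1 = i)
    (h₁ : (x₁ : ℕ) + 2 = i) (B : Matrix (Fin n) (Fin n) ℝ) :
    Lmat n i q * B = B.updateRow x₀ (fun b => B x₀ b + q * B x₁ b) := by
  ext a b
  have hsum : (∑ c, (Matrix.of fun a b : Fin n =>
      if a.val + 1 = i ∧ b.val + 2 = i then q else 0) a c * B c b)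
      = if (a : ℕ) + 1 = i then q * B x₁ b else 0 := by
    rw [Finset.sum_eq_single x₁]
    · by_cases h : (a : ℕ) + 1 = i <;> simp [h, h₁]
    · intro c _ hc
      have : ¬ ((c : ℕ) + 2 = i) := fun h => hc (Fin.ext (by omega))
      simp [this]
    · simp
  rw [Lmat, Matrix.add_mul, Matrix.one_mul, Matrix.add_apply, Matrix.mul_apply, hsum,
    Matrix.updateRow_apply]
  by_cases h : a = x₀
  · subst h; simp [h₀]
  · have : ¬ ((a : ℕ) + 1 = i) := fun hh => h (Fin.ext (by omega))
    simp [h, this]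

lemma up_mul {i : ℕ} {q : ℝ} (x₀ x₁ : Fin n) (h₀ : (x₀ : ℕ) + 1 = i)
    (h₁ : (x₁ : ℕ) + 2 = i) (B : Matrix (Fin n) (Fin n) ℝ) :
    (Lmat n i q).transpose * B = B.updateRow x₁ (fun b => B x₁ b + q * B x₀ b) := by
  ext a b
  have hsum : (∑ c, (Matrix.of fun a b : Fin n =>
      if a.val + 1 = i ∧ b.val + 2 = i then q else 0).transpose a c * B c b)
      = if (a : ℕ) + 2 = i then q * B x₀ b else 0 := by
    rw [Finset.sum_eq_single x₀]
    · by_cases h : (a : ℕ) + 2 = i <;> simp [Matrix.transpose_apply, h, h₀]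
    · intro c _ hc
      have : ¬ ((c : ℕ) + 1 = i) := fun h => hc (Fin.ext (by omega))
      simp [Matrix.transpose_apply, this]
    · simp
  rw [Lmat, Matrix.transpose_add, Matrix.transpose_one, Matrix.add_mul, Matrix.one_mul,
    Matrix.add_apply, Matrix.mul_apply, hsum, Matrix.updateRow_apply]
  by_cases h : a = x₁
  · subst h; simp [h₁]
  · have : ¬ ((a : ℕ) + 2 = i) := fun hh => h (Fin.ext (by omega))
    simp [h, this]


lemma exists_emb_eq {S : Finset (Fin n)} {k : ℕ} (hS : S.card = k) {x : Fin n} (hx : x ∈ S) :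
    ∃ t, S.orderEmbOfFin hS t = x := by
  have := Finset.range_orderEmbOfFin S hS
  have hx' : x ∈ Set.range ⇑(S.orderEmbOfFin hS) := by rw [this]; exact hx
  exact hx'

/-- Minor of `Lmat * B` when the move fires. -/
lemma minor_low_move (B : Matrix (Fin n) (Fin n) ℝ) {k : ℕ} {S T : Finset (Fin n)}
    (hS : S.card = k) (hT : T.card = k) {i : ℕ} {q : ℝ} (x₀ x₁ : Fin n)
    (h₀ : (x₀ : ℕ) + 1 = i) (h₁ : (x₁ : ℕ) + 2 = i) (hm : x₀ ∈ S) (hn : x₁ ∉ S) :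
    minor (Lmat n i q * B) S T hS hT = minor B S T hS hT +
      q * minor B (insert x₁ (S.erase x₀)) T (by rw [card_move hm hn]; exact hS) hT := by
  classical
  set e := S.orderEmbOfFin hS with he
  set f := T.orderEmbOfFin hT with hf
  obtain ⟨t₀, ht₀⟩ := exists_emb_eq hS hm
  have hx10 : x₁ < x₀ := Fin.lt_def.mpr (by omega)
  have hM : (Lmat n i q * B).submatrix e f =
      (B.submatrix e f).updateRow t₀ (fun j => B x₀ (f j) + q * B x₁ (f j)) := by
    ext t j
    rw [low_mul x₀ x₁ h₀ h₁, Matrix.submatrix_apply, Matrix.updateRow_apply,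
      Matrix.updateRow_apply]
    by_cases h : t = t₀
    · subst h; simp [he, ht₀]
    · have : e t ≠ x₀ := fun hh => h (e.injective (by rw [hh, ht₀]))
      simp [h, this]
  have hsplit : ((B.submatrix e f).updateRow t₀ (fun j => B x₀ (f j) + q * B x₁ (f j))).det
      = ((B.submatrix e f).updateRow t₀ (fun j => B x₀ (f j))).det
        + q * ((B.submatrix e f).updateRow t₀ (fun j => B x₁ (f j))).det := by
    have : (fun j => B x₀ (f j) + q * B x₁ (f j))
        = (fun j => B x₀ (f j)) + (q • fun j => B x₁ (f j)) := by
      funext j; simp [Pi.add_apply, Pi.smul_apply, smul_eq_mul]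
    rw [this, Matrix.det_updateRow_add, Matrix.det_updateRow_smul]
  have hfirst : (B.submatrix e f).updateRow t₀ (fun j => B x₀ (f j)) = B.submatrix e f := by
    have : (fun j => B x₀ (f j)) = (B.submatrix e f) t₀ := by
      funext j; rw [Matrix.submatrix_apply, ht₀]
    rw [this, Matrix.updateRow_eq_self]
  -- second term is the minor at the moved set
  set S' : Finset (Fin n) := insert x₁ (S.erase x₀) with hS'def
  have hS' : S'.card = k := by rw [hS'def, card_move hm hn]; exact hS
  set g : Fin k → Fin n := Function.update (⇑e) t₀ x₁ with hg
  have hgmem : ∀ t, g t ∈ S' := by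
    intro t
    by_cases h : t = t₀
    · subst h; simp [hg, hS'def]
    · rw [hg, Function.update_of_ne h]
      have h1 : e t ∈ S := Finset.orderEmbOfFin_mem S hS t
      have h2 : e t ≠ x₀ := fun hh => h (e.injective (by rw [hh, ht₀]))
      exact Finset.mem_insert_of_mem (Finset.mem_erase.mpr ⟨h2, h1⟩)
  have hgt₀ : g t₀ = x₁ := by rw [hg]; simp
  have hgne : ∀ t, t ≠ t₀ → g t = e t := fun t ht => by rw [hg, Function.update_of_ne ht]
  have hgmono : StrictMono g := by
    intro t t' hlt
    by_cases h : t = t₀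
    · by_cases h' : t' = t₀
      · exact absurd hlt (by rw [h, h']; exact lt_irrefl t₀)
      · rw [h, hgt₀, hgne t' h']
        calc x₁ < x₀ := hx10
        _ = e t₀ := ht₀.symm
        _ < e t' := e.strictMono (h ▸ hlt)
    · by_cases h' : t' = t₀
      · rw [hgne t h, h', hgt₀]
        have h1 : e t < x₀ := by rw [← ht₀]; exact e.strictMono (h' ▸ hlt)
        have h2 : e t ≠ x₁ := fun hh => hn (hh ▸ Finset.orderEmbOfFin_mem S hS t)
        have h3 : (e t : ℕ) < (x₀ : ℕ) := h1
        exact Fin.lt_def.mpr (by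
          have : (e t : ℕ) ≠ (x₁ : ℕ) := fun hh => h2 (Fin.ext hh)
          omega)
      · rw [hgne t h, hgne t' h']
        exact e.strictMono hlt
  have hgeq : g = ⇑(S'.orderEmbOfFin hS') := Finset.orderEmbOfFin_unique hS' hgmem hgmono
  have hsecond : (B.submatrix e f).updateRow t₀ (fun j => B x₁ (f j))
      = B.submatrix (S'.orderEmbOfFin hS') (T.orderEmbOfFin hT) := by
    rw [← hgeq]
    ext t j
    rw [Matrix.updateRow_apply, Matrix.submatrix_apply]
    by_cases h : t = t₀
    · subst h; simp [hg, hf]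
    · rw [Matrix.submatrix_apply, hg, Function.update_of_ne h]
      simp [h, hf]
  rw [minor, hM, hsplit, hfirst, hsecond]
  rfl

/-- Minor of `Lmat * B` when no move is possible. -/
lemma minor_low_skip (B : Matrix (Fin n) (Fin n) ℝ) {k : ℕ} {S T : Finset (Fin n)}
    (hS : S.card = k) (hT : T.card = k) {i : ℕ} {q : ℝ} (x₀ x₁ : Fin n)
    (h₀ : (x₀ : ℕ) + 1 = i) (h₁ : (x₁ : ℕ) + 2 = i) (h : x₀ ∉ S ∨ x₁ ∈ S) :
    minor (Lmat n i q * B) S T hS hT = minor B S T hS hT := by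
  classical
  set e := S.orderEmbOfFin hS with he
  set f := T.orderEmbOfFin hT with hf
  rcases h with h | h
  · have hM : (Lmat n i q * B).submatrix e f = B.submatrix e f := by
      ext t j
      rw [low_mul x₀ x₁ h₀ h₁, Matrix.submatrix_apply, Matrix.updateRow_apply]
      have : e t ≠ x₀ := fun hh => h (hh ▸ Finset.orderEmbOfFin_mem S hS t)
      simp [this]
    rw [minor, hM]; rfl
  · by_cases hm : x₀ ∈ S
    · obtain ⟨t₀, ht₀⟩ := exists_emb_eq hS hm
      obtain ⟨t₁, ht₁⟩ := exists_emb_eq hS h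
      have hne : t₁ ≠ t₀ := by
        intro hh
        rw [hh, ht₀] at ht₁
        have : (x₀ : ℕ) = (x₁ : ℕ) := by rw [ht₁]
        omega
      have hM : (Lmat n i q * B).submatrix e f =
          (B.submatrix e f).updateRow t₀ (fun j => B x₀ (f j) + q * B x₁ (f j)) := by
        ext t j
        rw [low_mul x₀ x₁ h₀ h₁, Matrix.submatrix_apply, Matrix.updateRow_apply,
          Matrix.updateRow_apply]
        by_cases hh : t = t₀
        · subst hh; simp [he, ht₀]
        · have : e t ≠ x₀ := fun h2 => hh (e.injective (by rw [h2, ht₀]))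
          simp [hh, this]
      have hsplit : ((B.submatrix e f).updateRow t₀
            (fun j => B x₀ (f j) + q * B x₁ (f j))).det
          = ((B.submatrix e f).updateRow t₀ (fun j => B x₀ (f j))).det
            + q * ((B.submatrix e f).updateRow t₀ (fun j => B x₁ (f j))).det := by
        have : (fun j => B x₀ (f j) + q * B x₁ (f j))
            = (fun j => B x₀ (f j)) + (q • fun j => B x₁ (f j)) := by
          funext j; simp [Pi.add_apply, Pi.smul_apply, smul_eq_mul]
        rw [this, Matrix.det_updateRow_add, Matrix.det_updateRow_smul]
      have hfirst : (B.submatrix e f).updateRow t₀ (fun j => B x₀ (f j)) = B.submatrix e f := by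
        have : (fun j => B x₀ (f j)) = (B.submatrix e f) t₀ := by
          funext j; rw [Matrix.submatrix_apply, ht₀]
        rw [this, Matrix.updateRow_eq_self]
      have hzero : ((B.submatrix e f).updateRow t₀ (fun j => B x₁ (f j))).det = 0 := by
        apply Matrix.det_zero_of_row_eq hne
        funext j
        rw [Matrix.updateRow_apply, Matrix.updateRow_apply]
        simp [hne, Matrix.submatrix_apply, ht₁, he]
      rw [minor, hM, hsplit, hfirst, hzero]
      simp [minor, he, hf]
    · have hM : (Lmat n i q * B).submatrix e f = B.submatrix e f := by
        ext t j
        rw [low_mul x₀ x₁ h₀ h₁, Matrix.submatrix_apply, Matrix.updateRow_apply]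
        have : e t ≠ x₀ := fun hh => hm (hh ▸ Finset.orderEmbOfFin_mem S hS t)
        simp [this]
      rw [minor, hM]; rfl

lemma minor_up_move (B : Matrix (Fin n) (Fin n) ℝ) {k : ℕ} {S T : Finset (Fin n)}
    (hS : S.card = k) (hT : T.card = k) {i : ℕ} {q : ℝ} (x₀ x₁ : Fin n)
    (h₀ : (x₀ : ℕ) + 1 = i) (h₁ : (x₁ : ℕ) + 2 = i) (hm : x₁ ∈ S) (hn : x₀ ∉ S) :
    minor ((Lmat n i q).transpose * B) S T hS hT = minor B S T hS hT +
      q * minor B (insert x₀ (S.erase x₁)) T (by rw [card_move hm hn]; exact hS) hT := by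
  classical
  set e := S.orderEmbOfFin hS with he
  set f := T.orderEmbOfFin hT with hf
  obtain ⟨t₁, ht₁⟩ := exists_emb_eq hS hm
  have hx10 : x₁ < x₀ := Fin.lt_def.mpr (by omega)
  have hM : ((Lmat n i q).transpose * B).submatrix e f =
      (B.submatrix e f).updateRow t₁ (fun j => B x₁ (f j) + q * B x₀ (f j)) := by
    ext t j
    rw [up_mul x₀ x₁ h₀ h₁, Matrix.submatrix_apply, Matrix.updateRow_apply,
      Matrix.updateRow_apply]
    by_cases h : t = t₁
    · subst h; simp [he, ht₁]
    · have : e t ≠ x₁ := fun hh => h (e.injective (by rw [hh, ht₁]))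
      simp [h, this]
  have hsplit : ((B.submatrix e f).updateRow t₁ (fun j => B x₁ (f j) + q * B x₀ (f j))).det
      = ((B.submatrix e f).updateRow t₁ (fun j => B x₁ (f j))).det
        + q * ((B.submatrix e f).updateRow t₁ (fun j => B x₀ (f j))).det := by
    have : (fun j => B x₁ (f j) + q * B x₀ (f j))
        = (fun j => B x₁ (f j)) + (q • fun j => B x₀ (f j)) := by
      funext j; simp [Pi.add_apply, Pi.smul_apply, smul_eq_mul]
    rw [this, Matrix.det_updateRow_add, Matrix.det_updateRow_smul]
  have hfirst : (B.submatrix e f).updateRow t₁ (fun j => B x₁ (f j)) = B.submatrix e f := by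
    have : (fun j => B x₁ (f j)) = (B.submatrix e f) t₁ := by
      funext j; rw [Matrix.submatrix_apply, ht₁]
    rw [this, Matrix.updateRow_eq_self]
  set S' : Finset (Fin n) := insert x₀ (S.erase x₁) with hS'def
  have hS' : S'.card = k := by rw [hS'def, card_move hm hn]; exact hS
  set g : Fin k → Fin n := Function.update (⇑e) t₁ x₀ with hg
  have hgt : g t₁ = x₀ := by rw [hg]; simp
  have hgne : ∀ t, t ≠ t₁ → g t = e t := fun t ht => by rw [hg, Function.update_of_ne ht]
  have hgmem : ∀ t, g t ∈ S' := by
    intro t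
    by_cases h : t = t₁
    · rw [h, hgt]; exact Finset.mem_insert_self _ _
    · rw [hgne t h]
      have h1 : e t ∈ S := Finset.orderEmbOfFin_mem S hS t
      have h2 : e t ≠ x₁ := fun hh => h (e.injective (by rw [hh, ht₁]))
      exact Finset.mem_insert_of_mem (Finset.mem_erase.mpr ⟨h2, h1⟩)
  have hgmono : StrictMono g := by
    intro t t' hlt
    by_cases h : t = t₁
    · by_cases h' : t' = t₁
      · exact absurd hlt (by rw [h, h']; exact lt_irrefl t₁)
      · rw [h, hgt, hgne t' h']
        have h1 : x₁ < e t' := by rw [← ht₁]; exact e.strictMono (h ▸ hlt)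
        have h2 : e t' ≠ x₀ := fun hh => hn (hh ▸ Finset.orderEmbOfFin_mem S hS t')
        have h3 : (x₁ : ℕ) < (e t' : ℕ) := h1
        exact Fin.lt_def.mpr (by
          have : (e t' : ℕ) ≠ (x₀ : ℕ) := fun hh => h2 (Fin.ext hh)
          omega)
    · by_cases h' : t' = t₁
      · rw [hgne t h, h', hgt]
        calc e t < e t₁ := e.strictMono (h' ▸ hlt)
        _ = x₁ := ht₁
        _ < x₀ := hx10
      · rw [hgne t h, hgne t' h']
        exact e.strictMono hlt
  have hgeq : g = ⇑(S'.orderEmbOfFin hS') := Finset.orderEmbOfFin_unique hS' hgmem hgmono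
  have hsecond : (B.submatrix e f).updateRow t₁ (fun j => B x₀ (f j))
      = B.submatrix (S'.orderEmbOfFin hS') (T.orderEmbOfFin hT) := by
    rw [← hgeq]
    ext t j
    rw [Matrix.updateRow_apply, Matrix.submatrix_apply]
    by_cases h : t = t₁
    · subst h; simp [Matrix.submatrix_apply, hgt, hf]
    · simp only [if_neg h, Matrix.submatrix_apply, hgne t h, hf]
  rw [minor, hM, hsplit, hfirst, hsecond]
  rfl

lemma minor_up_skip (B : Matrix (Fin n) (Fin n) ℝ) {k : ℕ} {S T : Finset (Fin n)}
    (hS : S.card = k) (hT : T.card = k) {i : ℕ} {q : ℝ} (x₀ x₁ : Fin n)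
    (h₀ : (x₀ : ℕ) + 1 = i) (h₁ : (x₁ : ℕ) + 2 = i) (h : x₁ ∉ S ∨ x₀ ∈ S) :
    minor ((Lmat n i q).transpose * B) S T hS hT = minor B S T hS hT := by
  classical
  set e := S.orderEmbOfFin hS with he
  set f := T.orderEmbOfFin hT with hf
  rcases h with h | h
  · have hM : ((Lmat n i q).transpose * B).submatrix e f = B.submatrix e f := by
      ext t j
      rw [up_mul x₀ x₁ h₀ h₁, Matrix.submatrix_apply, Matrix.updateRow_apply]
      have : e t ≠ x₁ := fun hh => h (hh ▸ Finset.orderEmbOfFin_mem S hS t)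
      simp [this]
    rw [minor, hM]; rfl
  · by_cases hm : x₁ ∈ S
    · obtain ⟨t₁, ht₁⟩ := exists_emb_eq hS hm
      obtain ⟨t₀, ht₀⟩ := exists_emb_eq hS h
      have hne : t₀ ≠ t₁ := by
        intro hh
        rw [hh, ht₁] at ht₀
        have : (x₀ : ℕ) = (x₁ : ℕ) := by rw [ht₀]
        omega
      have hM : ((Lmat n i q).transpose * B).submatrix e f =
          (B.submatrix e f).updateRow t₁ (fun j => B x₁ (f j) + q * B x₀ (f j)) := by
        ext t j
        rw [up_mul x₀ x₁ h₀ h₁, Matrix.submatrix_apply, Matrix.updateRow_apply,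
          Matrix.updateRow_apply]
        by_cases hh : t = t₁
        · subst hh; simp [he, ht₁]
        · have : e t ≠ x₁ := fun h2 => hh (e.injective (by rw [h2, ht₁]))
          simp [hh, this]
      have hsplit : ((B.submatrix e f).updateRow t₁
            (fun j => B x₁ (f j) + q * B x₀ (f j))).det
          = ((B.submatrix e f).updateRow t₁ (fun j => B x₁ (f j))).det
            + q * ((B.submatrix e f).updateRow t₁ (fun j => B x₀ (f j))).det := by
        have : (fun j => B x₁ (f j) + q * B x₀ (f j))
            = (fun j => B x₁ (f j)) + (q • fun j => B x₀ (f j)) := by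
          funext j; simp [Pi.add_apply, Pi.smul_apply, smul_eq_mul]
        rw [this, Matrix.det_updateRow_add, Matrix.det_updateRow_smul]
      have hfirst : (B.submatrix e f).updateRow t₁ (fun j => B x₁ (f j)) = B.submatrix e f := by
        have : (fun j => B x₁ (f j)) = (B.submatrix e f) t₁ := by
          funext j; rw [Matrix.submatrix_apply, ht₁]
        rw [this, Matrix.updateRow_eq_self]
      have hzero : ((B.submatrix e f).updateRow t₁ (fun j => B x₀ (f j))).det = 0 := by
        apply Matrix.det_zero_of_row_eq hne
        funext j
        rw [Matrix.updateRow_apply, Matrix.updateRow_apply]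
        simp [hne, Matrix.submatrix_apply, ht₀, he]
      rw [minor, hM, hsplit, hfirst, hzero]
      simp [minor, he, hf]
    · have hM : ((Lmat n i q).transpose * B).submatrix e f = B.submatrix e f := by
        ext t j
        rw [up_mul x₀ x₁ h₀ h₁, Matrix.submatrix_apply, Matrix.updateRow_apply]
        have : e t ≠ x₁ := fun hh => hm (hh ▸ Finset.orderEmbOfFin_mem S hS t)
        simp [this]
      rw [minor, hM]; rfl

lemma minor_dg (B : Matrix (Fin n) (Fin n) ℝ) {k : ℕ} {S T : Finset (Fin n)}
    (hS : S.card = k) (hT : T.card = k) (d : Fin n → ℝ) :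
    minor (Matrix.diagonal d * B) S T hS hT
      = (∏ t : Fin k, d (S.orderEmbOfFin hS t)) * minor B S T hS hT := by
  classical
  have hM : (Matrix.diagonal d * B).submatrix (S.orderEmbOfFin hS) (T.orderEmbOfFin hT)
      = Matrix.of fun t j => d (S.orderEmbOfFin hS t) *
          (B.submatrix (S.orderEmbOfFin hS) (T.orderEmbOfFin hT)) t j := by
    ext t j
    rw [Matrix.submatrix_apply, Matrix.diagonal_mul]
    rfl
  rw [minor, hM, Matrix.det_mul_column]
  rfl

lemma minor_one {k : ℕ} {S T : Finset (Fin n)} (hS : S.card = k) (hT : T.card = k) :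
    minor (1 : Matrix (Fin n) (Fin n) ℝ) S T hS hT = if S = T then 1 else 0 := by
  classical
  by_cases h : S = T
  · subst h
    rw [if_pos rfl, minor]
    have : (1 : Matrix (Fin n) (Fin n) ℝ).submatrix (S.orderEmbOfFin hS) (S.orderEmbOfFin hT)
        = (1 : Matrix (Fin k) (Fin k) ℝ) := by
      ext t j
      rw [Matrix.submatrix_apply]
      by_cases hh : t = j
      · subst hh
        have : S.orderEmbOfFin hS t = S.orderEmbOfFin hT t := rfl
        simp [Matrix.one_apply]
      · have : S.orderEmbOfFin hS t ≠ S.orderEmbOfFin hT j := by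
          intro h2
          exact hh ((S.orderEmbOfFin hS).injective (h2.trans rfl))
        simp [Matrix.one_apply, hh, this]
    rw [this, Matrix.det_one]
  · rw [if_neg h, minor]
    have hex : ∃ x ∈ S, x ∉ T := by
      by_contra hc
      push_neg at hc
      exact h (Finset.eq_of_subset_of_card_le (fun x hx => hc x hx) (by omega))
    obtain ⟨x, hxS, hxT⟩ := hex
    obtain ⟨t₀, ht₀⟩ := exists_emb_eq hS hxS
    apply Matrix.det_eq_zero_of_row_eq_zero t₀
    intro j
    rw [Matrix.submatrix_apply, ht₀]
    have : x ≠ T.orderEmbOfFin hT j := fun hh => hxT (hh ▸ Finset.orderEmbOfFin_mem T hT j)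
    simp [Matrix.one_apply, this]

def PosWord (w : List (Atom n)) : Prop := ∀ a ∈ w, a.Pos

theorem minor_nonneg (w : List (Atom n)) (hw : PosWord w) :
    ∀ {k : ℕ} (S T : Finset (Fin n)) (hS : S.card = k) (hT : T.card = k),
    0 ≤ minor (wprod w) S T hS hT := by
  induction w with
  | nil =>
    intro k S T hS hT
    rw [wprod_nil, minor_one]
    split <;> norm_num
  | cons a w ih =>
    intro k S T hS hT
    have hwa : a.Pos := hw a (List.mem_cons_self)
    have hw' : PosWord w := fun b hb => hw b (List.mem_cons_of_mem _ hb)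
    cases a with
    | low i q =>
      obtain ⟨hq, hi2, hin⟩ := hwa
      have hx0 : i - 1 < n := by omega
      have hx1 : i - 2 < n := by omega
      set x₀ : Fin n := ⟨i - 1, hx0⟩
      set x₁ : Fin n := ⟨i - 2, hx1⟩
      have h₀ : (x₀ : ℕ) + 1 = i := by show i - 1 + 1 = i; omega
      have h₁ : (x₁ : ℕ) + 2 = i := by show i - 2 + 2 = i; omega
      rw [wprod_cons]
      by_cases hm : x₀ ∈ S
      · by_cases hn : x₁ ∈ S
        · rw [show (Atom.low i q).mat = Lmat n i q from rfl,
            minor_low_skip (wprod w) hS hT x₀ x₁ h₀ h₁ (Or.inr hn)]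
          exact ih hw' S T hS hT
        · rw [show (Atom.low i q).mat = Lmat n i q from rfl,
            minor_low_move (wprod w) hS hT x₀ x₁ h₀ h₁ hm hn]
          exact add_nonneg (ih hw' S T hS hT) (mul_nonneg hq.le (ih hw' _ T _ hT))
      · rw [show (Atom.low i q).mat = Lmat n i q from rfl,
          minor_low_skip (wprod w) hS hT x₀ x₁ h₀ h₁ (Or.inl hm)]
        exact ih hw' S T hS hT
    | up i q =>
      obtain ⟨hq, hi2, hin⟩ := hwa
      have hx0 : i - 1 < n := by omega
      have hx1 : i - 2 < n := by omega
      set x₀ : Fin n := ⟨i - 1, hx0⟩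
      set x₁ : Fin n := ⟨i - 2, hx1⟩
      have h₀ : (x₀ : ℕ) + 1 = i := by show i - 1 + 1 = i; omega
      have h₁ : (x₁ : ℕ) + 2 = i := by show i - 2 + 2 = i; omega
      rw [wprod_cons]
      by_cases hm : x₁ ∈ S
      · by_cases hn : x₀ ∈ S
        · rw [show (Atom.up i q).mat = (Lmat n i q).transpose from rfl,
            minor_up_skip (wprod w) hS hT x₀ x₁ h₀ h₁ (Or.inr hn)]
          exact ih hw' S T hS hT
        · rw [show (Atom.up i q).mat = (Lmat n i q).transpose from rfl,
            minor_up_move (wprod w) hS hT x₀ x₁ h₀ h₁ hm hn]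
          exact add_nonneg (ih hw' S T hS hT) (mul_nonneg hq.le (ih hw' _ T _ hT))
      · rw [show (Atom.up i q).mat = (Lmat n i q).transpose from rfl,
          minor_up_skip (wprod w) hS hT x₀ x₁ h₀ h₁ (Or.inl hm)]
        exact ih hw' S T hS hT
    | dg d =>
      rw [wprod_cons, show (Atom.dg d).mat = Matrix.diagonal d from rfl,
        minor_dg (wprod w) hS hT d]
      exact mul_nonneg (Finset.prod_nonneg fun t _ => (hwa _).le) (ih hw' S T hS hT)

theorem minor_pos (w : List (Atom n)) (hw : PosWord w) :
    ∀ {k : ℕ} (S T : Finset (Fin n)) (hS : S.card = k) (hT : T.card = k),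
    Reach w S T → 0 < minor (wprod w) S T hS hT := by
  induction w with
  | nil =>
    intro k S T hS hT h
    cases h
    rw [wprod_nil, minor_one, if_pos rfl]
    norm_num
  | cons a w ih =>
    intro k S T hS hT h
    have hwa : a.Pos := hw a (List.mem_cons_self)
    have hw' : PosWord w := fun b hb => hw b (List.mem_cons_of_mem _ hb)
    cases a with
    | low i q =>
      obtain ⟨hq, hi2, hin⟩ := hwa
      have hx0 : i - 1 < n := by omega
      have hx1 : i - 2 < n := by omega
      set x₀ : Fin n := ⟨i - 1, hx0⟩
      set x₁ : Fin n := ⟨i - 2, hx1⟩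
      have h₀ : (x₀ : ℕ) + 1 = i := by show i - 1 + 1 = i; omega
      have h₁ : (x₁ : ℕ) + 2 = i := by show i - 2 + 2 = i; omega
      rw [wprod_cons]
      by_cases hm : x₀ ∈ S
      · by_cases hn : x₁ ∈ S
        · rw [show (Atom.low i q).mat = Lmat n i q from rfl,
            minor_low_skip (wprod w) hS hT x₀ x₁ h₀ h₁ (Or.inr hn)]
          cases h with
          | skip _ h' => exact ih hw' S T hS hT h'
          | low x₀' x₁' h₀' h₁' hm' hn' h' =>
            have : x₁' = x₁ := Fin.ext (by omega)
            exact absurd (this ▸ hn') (by simp [hn])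
        · rw [show (Atom.low i q).mat = Lmat n i q from rfl,
            minor_low_move (wprod w) hS hT x₀ x₁ h₀ h₁ hm hn]
          cases h with
          | skip _ h' =>
            exact add_pos_of_pos_of_nonneg (ih hw' S T hS hT h')
              (mul_nonneg hq.le (minor_nonneg w hw' _ T _ hT))
          | low x₀' x₁' h₀' h₁' hm' hn' h' =>
            have e0 : x₀' = x₀ := Fin.ext (by omega)
            have e1 : x₁' = x₁ := Fin.ext (by omega)
            rw [e0, e1] at h'
            exact add_pos_of_nonneg_of_pos (minor_nonneg w hw' S T hS hT)
              (mul_pos hq (ih hw' _ T _ hT h'))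
      · rw [show (Atom.low i q).mat = Lmat n i q from rfl,
          minor_low_skip (wprod w) hS hT x₀ x₁ h₀ h₁ (Or.inl hm)]
        cases h with
        | skip _ h' => exact ih hw' S T hS hT h'
        | low x₀' x₁' h₀' h₁' hm' hn' h' =>
          have : x₀' = x₀ := Fin.ext (by omega)
          exact absurd (this ▸ hm') hm
    | up i q =>
      obtain ⟨hq, hi2, hin⟩ := hwa
      have hx0 : i - 1 < n := by omega
      have hx1 : i - 2 < n := by omega
      set x₀ : Fin n := ⟨i - 1, hx0⟩
      set x₁ : Fin n := ⟨i - 2, hx1⟩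
      have h₀ : (x₀ : ℕ) + 1 = i := by show i - 1 + 1 = i; omega
      have h₁ : (x₁ : ℕ) + 2 = i := by show i - 2 + 2 = i; omega
      rw [wprod_cons]
      by_cases hm : x₁ ∈ S
      · by_cases hn : x₀ ∈ S
        · rw [show (Atom.up i q).mat = (Lmat n i q).transpose from rfl,
            minor_up_skip (wprod w) hS hT x₀ x₁ h₀ h₁ (Or.inr hn)]
          cases h with
          | skip _ h' => exact ih hw' S T hS hT h'
          | up x₀' x₁' h₀' h₁' hm' hn' h' =>
            have : x₀' = x₀ := Fin.ext (by omega)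
            exact absurd (this ▸ hn') (by simp [hn])
        · rw [show (Atom.up i q).mat = (Lmat n i q).transpose from rfl,
            minor_up_move (wprod w) hS hT x₀ x₁ h₀ h₁ hm hn]
          cases h with
          | skip _ h' =>
            exact add_pos_of_pos_of_nonneg (ih hw' S T hS hT h')
              (mul_nonneg hq.le (minor_nonneg w hw' _ T _ hT))
          | up x₀' x₁' h₀' h₁' hm' hn' h' =>
            have e0 : x₀' = x₀ := Fin.ext (by omega)
            have e1 : x₁' = x₁ := Fin.ext (by omega)
            rw [e0, e1] at h'
            exact add_pos_of_nonneg_of_pos (minor_nonneg w hw' S T hS hT)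
              (mul_pos hq (ih hw' _ T _ hT h'))
      · rw [show (Atom.up i q).mat = (Lmat n i q).transpose from rfl,
          minor_up_skip (wprod w) hS hT x₀ x₁ h₀ h₁ (Or.inl hm)]
        cases h with
        | skip _ h' => exact ih hw' S T hS hT h'
        | up x₀' x₁' h₀' h₁' hm' hn' h' =>
          have : x₁' = x₁ := Fin.ext (by omega)
          exact absurd (this ▸ hm') hm
    | dg d =>
      rw [wprod_cons, show (Atom.dg d).mat = Matrix.diagonal d from rfl,
        minor_dg (wprod w) hS hT d]
      cases h with
      | skip _ h' =>
        exact mul_pos (Finset.prod_pos fun t _ => hwa _) (ih hw' S T hS hT h')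

theorem minor_zero (w : List (Atom n)) (hw : PosWord w) :
    ∀ {k : ℕ} (S T : Finset (Fin n)) (hS : S.card = k) (hT : T.card = k),
    ¬ Reach w S T → minor (wprod w) S T hS hT = 0 := by
  induction w with
  | nil =>
    intro k S T hS hT h
    have : S ≠ T := fun hh => h (hh ▸ Reach.nil S)
    rw [wprod_nil, minor_one, if_neg this]
  | cons a w ih =>
    intro k S T hS hT h
    have hwa : a.Pos := hw a (List.mem_cons_self)
    have hw' : PosWord w := fun b hb => hw b (List.mem_cons_of_mem _ hb)
    have hskip : ¬ Reach w S T := fun hh => h (.skip a hh)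
    cases a with
    | low i q =>
      obtain ⟨hq, hi2, hin⟩ := hwa
      have hx0 : i - 1 < n := by omega
      have hx1 : i - 2 < n := by omega
      set x₀ : Fin n := ⟨i - 1, hx0⟩
      set x₁ : Fin n := ⟨i - 2, hx1⟩
      have h₀ : (x₀ : ℕ) + 1 = i := by show i - 1 + 1 = i; omega
      have h₁ : (x₁ : ℕ) + 2 = i := by show i - 2 + 2 = i; omega
      rw [wprod_cons]
      by_cases hm : x₀ ∈ S
      · by_cases hn : x₁ ∈ S
        · rw [show (Atom.low i q).mat = Lmat n i q from rfl,
            minor_low_skip (wprod w) hS hT x₀ x₁ h₀ h₁ (Or.inr hn)]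
          exact ih hw' S T hS hT hskip
        · have hmv : ¬ Reach w (insert x₁ (S.erase x₀)) T :=
            fun hh => h (.low x₀ x₁ h₀ h₁ hm hn hh)
          rw [show (Atom.low i q).mat = Lmat n i q from rfl,
            minor_low_move (wprod w) hS hT x₀ x₁ h₀ h₁ hm hn,
            ih hw' S T hS hT hskip, ih hw' _ T _ hT hmv]
          ring
      · rw [show (Atom.low i q).mat = Lmat n i q from rfl,
          minor_low_skip (wprod w) hS hT x₀ x₁ h₀ h₁ (Or.inl hm)]
        exact ih hw' S T hS hT hskip
    | up i q =>
      obtain ⟨hq, hi2, hin⟩ := hwa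
      have hx0 : i - 1 < n := by omega
      have hx1 : i - 2 < n := by omega
      set x₀ : Fin n := ⟨i - 1, hx0⟩
      set x₁ : Fin n := ⟨i - 2, hx1⟩
      have h₀ : (x₀ : ℕ) + 1 = i := by show i - 1 + 1 = i; omega
      have h₁ : (x₁ : ℕ) + 2 = i := by show i - 2 + 2 = i; omega
      rw [wprod_cons]
      by_cases hm : x₁ ∈ S
      · by_cases hn : x₀ ∈ S
        · rw [show (Atom.up i q).mat = (Lmat n i q).transpose from rfl,
            minor_up_skip (wprod w) hS hT x₀ x₁ h₀ h₁ (Or.inr hn)]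
          exact ih hw' S T hS hT hskip
        · have hmv : ¬ Reach w (insert x₀ (S.erase x₁)) T :=
            fun hh => h (.up x₀ x₁ h₀ h₁ hm hn hh)
          rw [show (Atom.up i q).mat = (Lmat n i q).transpose from rfl,
            minor_up_move (wprod w) hS hT x₀ x₁ h₀ h₁ hm hn,
            ih hw' S T hS hT hskip, ih hw' _ T _ hT hmv]
          ring
      · rw [show (Atom.up i q).mat = (Lmat n i q).transpose from rfl,
          minor_up_skip (wprod w) hS hT x₀ x₁ h₀ h₁ (Or.inl hm)]
        exact ih hw' S T hS hT hskip
    | dg d =>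
      rw [wprod_cons, show (Atom.dg d).mat = Matrix.diagonal d from rfl,
        minor_dg (wprod w) hS hT d, ih hw' S T hS hT hskip]
      ring

/-! ### Bridges to TotallyNonneg / TotallyPos -/

lemma image_card {k : ℕ} (r : Fin k → Fin n) (hr : StrictMono r) :
    (Finset.image r Finset.univ).card = k := by
  rw [Finset.card_image_of_injective _ hr.injective, Finset.card_univ, Fintype.card_fin]

lemma det_submatrix_eq_minor (A : Matrix (Fin n) (Fin n) ℝ) {k : ℕ} (r c : Fin k → Fin n)
    (hr : StrictMono r) (hc : StrictMono c) :
    (A.submatrix r c).det = minor A (Finset.image r Finset.univ) (Finset.image c Finset.univ)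
      (image_card r hr) (image_card c hc) := by
  rw [minor]
  congr 1
  rw [← Finset.orderEmbOfFin_unique (image_card r hr)
      (fun t => Finset.mem_image_of_mem r (Finset.mem_univ t)) hr,
    ← Finset.orderEmbOfFin_unique (image_card c hc)
      (fun t => Finset.mem_image_of_mem c (Finset.mem_univ t)) hc]

theorem tn_of (w : List (Atom n)) (hw : PosWord w) : TotallyNonneg (wprod w) := by
  intro k r c hr hc
  rw [det_submatrix_eq_minor _ r c hr hc]
  exact minor_nonneg w hw _ _ _ _

theorem tp_of (w : List (Atom n)) (hw : PosWord w)
    (hreach : ∀ (S T : Finset (Fin n)), S.card = T.card → Reach w S T) :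
    TotallyPos (wprod w) := by
  intro k r c hr hc
  rw [det_submatrix_eq_minor _ r c hr hc]
  exact minor_pos w hw _ _ _ _
    (hreach _ _ (by rw [image_card r hr, image_card c hc]))

theorem not_tp (w : List (Atom n)) (hw : PosWord w) {k : ℕ} (S T : Finset (Fin n))
    (hS : S.card = k) (hT : T.card = k) (h : ¬ Reach w S T) : ¬ TotallyPos (wprod w) := by
  intro htp
  have := htp k (S.orderEmbOfFin hS) (T.orderEmbOfFin hT)
    (S.orderEmbOfFin hS).strictMono (T.orderEmbOfFin hT).strictMono
  rw [show ((wprod w).submatrix ⇑(S.orderEmbOfFin hS) ⇑(T.orderEmbOfFin hT)).det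
    = minor (wprod w) S T hS hT from rfl, minor_zero w hw S T hS hT h] at this
  exact lt_irrefl 0 this

/-! ### Concrete words -/

def Atom.flip : Atom n → Atom n
  | .low i q => .up i q
  | .up i q => .low i q
  | .dg d => .dg d

def flipw (w : List (Atom n)) : List (Atom n) := (w.map Atom.flip).reverse

lemma flip_mat (a : Atom n) : a.flip.mat = (a.mat).transpose := by
  cases a with
  | low i q => rfl
  | up i q => show Lmat n i q = (Lmat n i q).transpose.transpose
              rw [Matrix.transpose_transpose]
  | dg d => show Matrix.diagonal d = (Matrix.diagonal d).transpose
            rw [Matrix.diagonal_transpose]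

lemma flip_pos (a : Atom n) (h : a.Pos) : a.flip.Pos := by
  cases a with
  | low i q => exact h
  | up i q => exact h
  | dg d => exact h

@[simp] lemma wprod_singleton (a : Atom n) : wprod [a] = a.mat := by
  simp [wprod]

lemma wprod_flipw (w : List (Atom n)) : wprod (flipw w) = (wprod w).transpose := by
  induction w with
  | nil => simp [flipw, Matrix.transpose_one]
  | cons a w ih =>
    have : flipw (a :: w) = flipw w ++ [a.flip] := by
      simp [flipw]
    rw [this, wprod_append, ih, wprod_singleton, flip_mat, wprod_cons, Matrix.transpose_mul]

lemma posword_append {w₁ w₂ : List (Atom n)} (h₁ : PosWord w₁) (h₂ : PosWord w₂) :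
    PosWord (w₁ ++ w₂) := by
  intro a ha
  rcases List.mem_append.mp ha with h | h
  · exact h₁ a h
  · exact h₂ a h

lemma posword_flipw {w : List (Atom n)} (h : PosWord w) : PosWord (flipw w) := by
  intro a ha
  rw [flipw, List.mem_reverse] at ha
  obtain ⟨b, hb, rfl⟩ := List.mem_map.mp ha
  exact flip_pos b (h b hb)

def dlist (n m cnt : ℕ) (v : ℕ → ℝ) : List (Atom n) :=
  (List.range cnt).map fun j => .low (m - j) (v j)

def ulist (n lo cnt : ℕ) (v : ℕ → ℝ) : List (Atom n) :=
  (List.range cnt).map fun j => .up (lo + j) (v j)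

lemma dlist_cons (m cnt : ℕ) (v : ℕ → ℝ) :
    dlist n m (cnt + 1) v = .low m (v 0) :: dlist n (m - 1) cnt (fun j => v (j + 1)) := by
  rw [dlist, List.range_succ_eq_map, List.map_cons, List.map_map]
  simp only [Nat.sub_zero]
  congr 1
  apply List.map_congr_left
  intro j _
  show Atom.low (m - (j + 1)) (v (j + 1)) = Atom.low (m - 1 - j) (v (j + 1))
  congr 1
  omega

lemma ulist_cons (lo cnt : ℕ) (v : ℕ → ℝ) :
    ulist n lo (cnt + 1) v = .up lo (v 0) :: ulist n (lo + 1) cnt (fun j => v (j + 1)) := by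
  rw [ulist, List.range_succ_eq_map, List.map_cons, List.map_map]
  simp only [Nat.add_zero]
  congr 1
  apply List.map_congr_left
  intro j _
  show Atom.up (lo + (j + 1)) (v (j + 1)) = Atom.up (lo + 1 + j) (v (j + 1))
  congr 1
  omega

lemma flipw_dlist (m cnt : ℕ) (hcnt : cnt ≤ m) (v : ℕ → ℝ) :
    flipw (dlist n m cnt v) = ulist n (m - cnt + 1) cnt (fun j => v (cnt - 1 - j)) := by
  apply List.ext_getElem
  · simp [flipw, dlist, ulist]
  · intro j h₁ h₂
    have hj : j < cnt := by simpa [flipw, dlist] using h₁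
    simp only [flipw, List.getElem_reverse, List.length_map, dlist, ulist, List.length_range,
      List.getElem_map, List.getElem_range]
    show Atom.up (m - (cnt - 1 - j)) (v (cnt - 1 - j)) = Atom.up (m - cnt + 1 + j) (v (cnt - 1 - j))
    congr 1
    omega

lemma wprod_flatten (l : List (List (Atom n))) :
    wprod l.flatten = (l.map wprod).prod := by
  induction l with
  | nil => simp [wprod]
  | cons a l ih => rw [List.flatten_cons, wprod_append, ih, List.map_cons, List.prod_cons]

lemma wprod_dlist_eq_Wmat (i : ℕ) (v : ℕ → ℝ) :
    wprod (dlist n n (n - i + 1) v) = Wmat n i v := by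
  rw [Wmat, wprod]
  congr 1
  apply List.ext_getElem
  · simp [dlist]
  · intro j h₁ h₂
    simp only [dlist, List.map_map, List.getElem_map, List.getElem_range, List.getElem_ofFn]
    rfl

/-! ### Slides along sweeps -/

lemma slide_down (v : ℕ → ℝ) : ∀ (cnt : ℕ) (m : ℕ) (vv : ℕ → ℝ) (S : Finset (Fin n))
    (a b : Fin n), b ≤ a → (a : ℕ) + 1 ≤ m → m ≤ cnt + (b : ℕ) + 1 →
    a ∈ S → (∀ y : Fin n, b ≤ y → y < a → y ∉ S) →
    Reach (dlist n m cnt vv) S (insert b (S.erase a)) := by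
  intro cnt
  induction cnt with
  | zero =>
    intro m vv S a b hba ham hcnt hS hfree
    have : a = b := le_antisymm (by omega : (a:ℕ) ≤ (b:ℕ)) hba
    rw [this] at hS ⊢
    rw [Finset.insert_erase hS]
    exact Reach.refl _ S
  | succ cnt ih =>
    intro m vv S a b hba ham hcnt hS hfree
    by_cases hab : a = b
    · rw [hab] at hS ⊢
      rw [Finset.insert_erase hS]
      exact Reach.refl _ S
    · have hba' : (b : ℕ) < (a : ℕ) :=
        Fin.lt_def.mp (lt_of_le_of_ne hba (fun hh => hab hh.symm))
      rw [dlist_cons]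
      by_cases hm : (a : ℕ) + 1 = m
      · have ha1 : (a : ℕ) - 1 < n := by omega
        set x₁ : Fin n := ⟨(a : ℕ) - 1, ha1⟩ with hx₁
        have h₀ : (a : ℕ) + 1 = m := hm
        have h₁ : (x₁ : ℕ) + 2 = m := by show (a:ℕ) - 1 + 2 = m; omega
        have hbx : (b : ℕ) ≤ (x₁ : ℕ) := by show (b:ℕ) ≤ (a:ℕ) - 1; omega
        have hx1a : x₁ < a := Fin.lt_def.mpr (by show (a:ℕ) - 1 < (a:ℕ); omega)
        have hx1n : x₁ ∉ S := hfree x₁ (Fin.le_def.mpr hbx) hx1a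
        apply Reach.low a x₁ h₀ h₁ hS hx1n
        have hset : insert b (S.erase a)
            = insert b ((insert x₁ (S.erase a)).erase x₁) := by
          rw [Finset.erase_insert (fun hh => hx1n (Finset.mem_of_mem_erase hh))]
        rw [hset]
        have := ih (m - 1) (fun j => vv (j + 1)) (insert x₁ (S.erase a)) x₁ b
          (Fin.le_def.mpr hbx) (by show (a:ℕ) - 1 + 1 ≤ m - 1; omega) (by omega)
          (Finset.mem_insert_self _ _)
          (fun y hy1 hy2 => by
            intro hy
            rcases Finset.mem_insert.mp hy with h | h
            · exact absurd (h ▸ hy2) (lt_irrefl _)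
            · exact hfree y hy1 (lt_trans hy2 hx1a) (Finset.mem_of_mem_erase h))
        exact this
      · apply Reach.skip
        exact ih (m - 1) (fun j => vv (j + 1)) S a b hba (by omega) (by omega) hS hfree

lemma slide_up (v : ℕ → ℝ) : ∀ (cnt : ℕ) (lo : ℕ) (vv : ℕ → ℝ) (S : Finset (Fin n))
    (a b : Fin n), a ≤ b → lo ≤ (a : ℕ) + 2 → (b : ℕ) + 2 ≤ lo + cnt →
    a ∈ S → (∀ y : Fin n, a < y → y ≤ b → y ∉ S) →
    Reach (ulist n lo cnt vv) S (insert b (S.erase a)) := by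
  intro cnt
  induction cnt with
  | zero =>
    intro lo vv S a b hab hlo hcnt hS hfree
    have : a = b := le_antisymm hab (by omega : (b:ℕ) ≤ (a:ℕ))
    rw [this] at hS ⊢
    rw [Finset.insert_erase hS]
    exact Reach.refl _ S
  | succ cnt ih =>
    intro lo vv S a b hab hlo hcnt hS hfree
    by_cases hab' : a = b
    · rw [hab'] at hS ⊢
      rw [Finset.insert_erase hS]
      exact Reach.refl _ S
    · have hab2 : (a : ℕ) < (b : ℕ) :=
        Fin.lt_def.mp (lt_of_le_of_ne hab hab')
      have hbn : (b : ℕ) < n := b.isLt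
      rw [ulist_cons]
      by_cases hlo' : lo = (a : ℕ) + 2
      · have ha1 : (a : ℕ) + 1 < n := by omega
        set x₀ : Fin n := ⟨(a : ℕ) + 1, ha1⟩ with hx₀
        have h₀ : (x₀ : ℕ) + 1 = lo := by show (a:ℕ) + 1 + 1 = lo; omega
        have h₁ : (a : ℕ) + 2 = lo := by omega
        have hax : a < x₀ := Fin.lt_def.mpr (by show (a:ℕ) < (a:ℕ) + 1; omega)
        have hxb : (x₀ : ℕ) ≤ (b : ℕ) := by show (a:ℕ) + 1 ≤ (b:ℕ); omega
        have hx0n : x₀ ∉ S := hfree x₀ hax (Fin.le_def.mpr hxb)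
        apply Reach.up x₀ a h₀ h₁ hS hx0n
        have hset : insert b (S.erase a)
            = insert b ((insert x₀ (S.erase a)).erase x₀) := by
          rw [Finset.erase_insert (fun hh => hx0n (Finset.mem_of_mem_erase hh))]
        rw [hset]
        exact ih (lo + 1) (fun j => vv (j + 1)) (insert x₀ (S.erase a)) x₀ b
          (Fin.le_def.mpr hxb) (by show lo + 1 ≤ (a:ℕ) + 1 + 2; omega) (by omega)
          (Finset.mem_insert_self _ _)
          (fun y hy1 hy2 => by
            intro hy
            rcases Finset.mem_insert.mp hy with h | h
            · exact absurd (h ▸ hy1) (lt_irrefl _)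
            · exact hfree y (lt_trans hax hy1) hy2 (Finset.mem_of_mem_erase h))
      · apply Reach.skip
        exact ih (lo + 1) (fun j => vv (j + 1)) S a b hab (by omega) (by omega) hS hfree

/-! ### Scheduling: configurations -/

lemma le_val_strictMono {kk m : ℕ} {g : Fin kk → Fin m} (hg : StrictMono g) (t : Fin kk) :
    (t : ℕ) ≤ (g t : ℕ) := by
  obtain ⟨j, hval⟩ : ∃ j, (t : ℕ) = j := ⟨_, rfl⟩
  induction j generalizing t with
  | zero => omega
  | succ j ih =>
    have hj : j < kk := by omega
    have hjj : ((⟨j, hj⟩ : Fin kk) : ℕ) = j := rfl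
    have h1 : (⟨j, hj⟩ : Fin kk) < t := Fin.lt_def.mpr (by rw [hjj]; omega)
    have h2 := ih ⟨j, hj⟩ rfl
    rw [hjj] at h2
    have h3 := Fin.lt_def.mp (hg h1)
    omega

lemma card_filter_lt {m : ℕ} (i : Fin m) : (Finset.univ.filter (· < i)).card = (i : ℕ) := by
  have : Finset.univ.filter (· < i) = Finset.Iio i := by ext x; simp
  rw [this, Fin.card_Iio]

lemma card_filter_gt {m : ℕ} (i : Fin m) :
    (Finset.univ.filter (i < ·)).card = m - 1 - (i : ℕ) := by
  have : Finset.univ.filter (i < ·) = Finset.Ioi i := by ext x; simp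
  rw [this, Fin.card_Ioi]

section Sched

variable {k : ℕ} (e f : Fin k ↪o Fin n)

def DSet : Finset (Fin k) := Finset.univ.filter fun t => f t < e t
def USet : Finset (Fin k) := Finset.univ.filter fun t => e t < f t
def rkD (t : Fin k) : ℕ := ((DSet e f).filter (· < t)).card
def rkU (t : Fin k) : ℕ := ((USet e f).filter (t < ·)).card

def cfg (d u : ℕ) : Fin k → Fin n := fun t =>
  if (t ∈ DSet e f ∧ rkD e f t < d) ∨ (t ∈ USet e f ∧ rkU e f t < u) then f t else e t

def cfgS (d u : ℕ) : Finset (Fin n) := Finset.image (cfg e f d u) Finset.univ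

lemma mem_DSet {t : Fin k} : t ∈ DSet e f ↔ f t < e t := by simp [DSet]
lemma mem_USet {t : Fin k} : t ∈ USet e f ↔ e t < f t := by simp [USet]

lemma not_DU {t : Fin k} (hD : t ∈ DSet e f) (hU : t ∈ USet e f) : False := by
  rw [mem_DSet] at hD; rw [mem_USet] at hU; exact absurd (hD.trans hU) (lt_irrefl _)

lemma nonmover_eq {t : Fin k} (hD : t ∉ DSet e f) (hU : t ∉ USet e f) : e t = f t := by
  rw [mem_DSet] at hD; rw [mem_USet] at hU
  exact le_antisymm (not_lt.mp hD) (not_lt.mp hU)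

lemma rkD_lt_card {t : Fin k} (ht : t ∈ DSet e f) : rkD e f t < (DSet e f).card := by
  apply Finset.card_lt_card
  constructor
  · exact Finset.filter_subset _ _
  · intro hsub
    have := hsub ht
    rw [Finset.mem_filter] at this
    exact absurd this.2 (lt_irrefl t)

lemma rkU_lt_card {t : Fin k} (ht : t ∈ USet e f) : rkU e f t < (USet e f).card := by
  apply Finset.card_lt_card
  constructor
  · exact Finset.filter_subset _ _
  · intro hsub
    have := hsub ht
    rw [Finset.mem_filter] at this
    exact absurd this.2 (lt_irrefl t)

lemma rkD_le_val (t : Fin k) : rkD e f t ≤ (t : ℕ) := by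
  rw [← card_filter_lt t]
  exact Finset.card_le_card (fun x hx => by
    rw [Finset.mem_filter] at hx ⊢
    exact ⟨Finset.mem_univ x, hx.2⟩)

lemma rkU_le (t : Fin k) : rkU e f t ≤ k - 1 - (t : ℕ) := by
  rw [← card_filter_gt t]
  exact Finset.card_le_card (fun x hx => by
    rw [Finset.mem_filter] at hx ⊢
    exact ⟨Finset.mem_univ x, hx.2⟩)

lemma rkD_strict {t t' : Fin k} (h : t < t') (ht : t ∈ DSet e f) :
    rkD e f t < rkD e f t' := by
  apply Finset.card_lt_card
  constructor
  · intro x hx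
    rw [Finset.mem_filter] at hx ⊢
    exact ⟨hx.1, hx.2.trans h⟩
  · intro hsub
    have ht' : t ∈ (DSet e f).filter (· < t') := Finset.mem_filter.mpr ⟨ht, h⟩
    have := hsub ht'
    rw [Finset.mem_filter] at this
    exact absurd this.2 (lt_irrefl t)

lemma rkU_strict {t t' : Fin k} (h : t < t') (ht : t' ∈ USet e f) :
    rkU e f t' < rkU e f t := by
  apply Finset.card_lt_card
  constructor
  · intro x hx
    rw [Finset.mem_filter] at hx ⊢
    exact ⟨hx.1, h.trans hx.2⟩
  · intro hsub
    have ht' : t' ∈ (USet e f).filter (t < ·) := Finset.mem_filter.mpr ⟨ht, h⟩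
    have := hsub ht'
    rw [Finset.mem_filter] at this
    exact absurd this.2 (lt_irrefl t')

lemma rkU_anti {t t' : Fin k} (h : t < t') : rkU e f t' ≤ rkU e f t :=
  Finset.card_le_card (fun x hx => by
    rw [Finset.mem_filter] at hx ⊢
    exact ⟨hx.1, h.trans hx.2⟩)

lemma rkD_mono {t t' : Fin k} (h : t < t') : rkD e f t ≤ rkD e f t' :=
  Finset.card_le_card (fun x hx => by
    rw [Finset.mem_filter] at hx ⊢
    exact ⟨hx.1, hx.2.trans h⟩)

lemma cfg_mono (d u : ℕ) : StrictMono (cfg e f d u) := by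
  intro t t' h
  unfold cfg
  by_cases hP : (t ∈ DSet e f ∧ rkD e f t < d) ∨ (t ∈ USet e f ∧ rkU e f t < u)
  · by_cases hP' : (t' ∈ DSet e f ∧ rkD e f t' < d) ∨ (t' ∈ USet e f ∧ rkU e f t' < u)
    · rw [if_pos hP, if_pos hP']; exact f.strictMono h
    · rw [if_pos hP, if_neg hP']
      rcases hP with ⟨hD, _⟩ | ⟨hU, hru⟩
      · exact lt_trans (mem_DSet e f |>.mp hD) (e.strictMono h)
      · by_cases hU' : t' ∈ USet e f
        · exact absurd (Or.inr ⟨hU', lt_of_le_of_lt (rkU_anti e f h) hru⟩) hP'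
        · by_cases hD' : t' ∈ DSet e f
          · exact lt_trans (f.strictMono h) (mem_DSet e f |>.mp hD')
          · calc f t < f t' := f.strictMono h
            _ = e t' := (nonmover_eq e f hD' hU').symm
  · by_cases hP' : (t' ∈ DSet e f ∧ rkD e f t' < d) ∨ (t' ∈ USet e f ∧ rkU e f t' < u)
    · rw [if_neg hP, if_pos hP']
      rcases hP' with ⟨hD', hrd⟩ | ⟨hU', _⟩
      · by_cases hD : t ∈ DSet e f
        · exact absurd (Or.inl ⟨hD, lt_of_lt_of_le (rkD_strict e f h hD) (le_of_lt hrd)⟩) hP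
        · by_cases hU : t ∈ USet e f
          · exact lt_trans (mem_USet e f |>.mp hU) (f.strictMono h)
          · calc e t = f t := nonmover_eq e f hD hU
            _ < f t' := f.strictMono h
      · exact lt_trans (e.strictMono h) (mem_USet e f |>.mp hU')
    · rw [if_neg hP, if_neg hP']; exact e.strictMono h

lemma cfg_inj (d u : ℕ) : Function.Injective (cfg e f d u) := (cfg_mono e f d u).injective

lemma cfgS_card (d u : ℕ) : (cfgS e f d u).card = k := by
  rw [cfgS, Finset.card_image_of_injective _ (cfg_inj e f d u), Finset.card_univ,
    Fintype.card_fin]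

lemma cfg_zero : cfg e f 0 0 = ⇑e := by
  funext t
  rw [cfg]
  simp

lemma cfg_done (d u : ℕ) (hd : (DSet e f).card ≤ d) (hu : (USet e f).card ≤ u) :
    cfg e f d u = ⇑f := by
  funext t
  rw [cfg]
  by_cases hD : t ∈ DSet e f
  · rw [if_pos (Or.inl ⟨hD, lt_of_lt_of_le (rkD_lt_card e f hD) hd⟩)]
  · by_cases hU : t ∈ USet e f
    · rw [if_pos (Or.inr ⟨hU, lt_of_lt_of_le (rkU_lt_card e f hU) hu⟩)]
    · rw [if_neg (by
        rintro (⟨h1, _⟩ | ⟨h1, _⟩)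
        exacts [hD h1, hU h1])]
      exact nonmover_eq e f hD hU

lemma cfg_clampD (d u : ℕ) (hd : (DSet e f).card ≤ d) :
    cfg e f d u = cfg e f (DSet e f).card u := by
  funext t
  rw [cfg, cfg]
  congr 1
  apply propext
  constructor
  · rintro (⟨h1, _⟩ | h)
    exacts [Or.inl ⟨h1, rkD_lt_card e f h1⟩, Or.inr h]
  · rintro (⟨h1, h2⟩ | h)
    exacts [Or.inl ⟨h1, lt_of_lt_of_le h2 hd⟩, Or.inr h]

end Sched

lemma image_update_univ {α β : Type*} [DecidableEq α] [DecidableEq β] [Fintype α]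
    {g : α → β} (hg : Function.Injective g) (x : α) (v : β) :
    Finset.image (Function.update g x v) Finset.univ
      = insert v ((Finset.image g Finset.univ).erase (g x)) := by
  ext y
  simp only [Finset.mem_image, Finset.mem_insert, Finset.mem_erase, Finset.mem_univ, true_and]
  constructor
  · rintro ⟨t, rfl⟩
    by_cases h : t = x
    · subst h; rw [Function.update_self]; exact Or.inl rfl
    · rw [Function.update_of_ne h]
      exact Or.inr ⟨fun hh => h (hg hh), t, rfl⟩
  · rintro (rfl | ⟨hne, t, rfl⟩)
    · exact ⟨x, by rw [Function.update_self]⟩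
    · have h : t ≠ x := fun hh => hne (by rw [hh])
      exact ⟨t, by rw [Function.update_of_ne h]⟩

section Sched2

variable {k : ℕ} (e f : Fin k ↪o Fin n)

lemma rkD_emb (j : Fin (DSet e f).card) :
    rkD e f ((DSet e f).orderEmbOfFin rfl j) = (j : ℕ) := by
  have himg : (DSet e f).filter (· < (DSet e f).orderEmbOfFin rfl j)
      = Finset.image ⇑((DSet e f).orderEmbOfFin rfl) (Finset.univ.filter (· < j)) := by
    ext x
    simp only [Finset.mem_filter, Finset.mem_image, Finset.mem_univ, true_and]
    constructor
    · rintro ⟨hx, hlt⟩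
      obtain ⟨j', hj'⟩ := exists_emb_eq rfl hx
      refine ⟨j', ?_, hj'⟩
      rw [← hj'] at hlt
      exact ((DSet e f).orderEmbOfFin rfl).lt_iff_lt.mp hlt
    · rintro ⟨j', hj', rfl⟩
      exact ⟨Finset.orderEmbOfFin_mem _ _ _,
        ((DSet e f).orderEmbOfFin rfl).lt_iff_lt.mpr hj'⟩
  rw [rkD, himg, Finset.card_image_of_injective _ ((DSet e f).orderEmbOfFin rfl).injective,
    card_filter_lt]

lemma rkU_emb (j : Fin (USet e f).card) :
    rkU e f ((USet e f).orderEmbOfFin rfl j) = (USet e f).card - 1 - (j : ℕ) := by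
  have himg : (USet e f).filter ((USet e f).orderEmbOfFin rfl j < ·)
      = Finset.image ⇑((USet e f).orderEmbOfFin rfl) (Finset.univ.filter (j < ·)) := by
    ext x
    simp only [Finset.mem_filter, Finset.mem_image, Finset.mem_univ, true_and]
    constructor
    · rintro ⟨hx, hlt⟩
      obtain ⟨j', hj'⟩ := exists_emb_eq rfl hx
      refine ⟨j', ?_, hj'⟩
      rw [← hj'] at hlt
      exact ((USet e f).orderEmbOfFin rfl).lt_iff_lt.mp hlt
    · rintro ⟨j', hj', rfl⟩
      exact ⟨Finset.orderEmbOfFin_mem _ _ _,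
        ((USet e f).orderEmbOfFin rfl).lt_iff_lt.mpr hj'⟩
  rw [rkU, himg, Finset.card_image_of_injective _ ((USet e f).orderEmbOfFin rfl).injective,
    card_filter_gt]

lemma eq_emb_of_rkD {t : Fin k} (ht : t ∈ DSet e f) {j : Fin (DSet e f).card}
    (hr : rkD e f t = (j : ℕ)) : t = (DSet e f).orderEmbOfFin rfl j := by
  obtain ⟨j', hj'⟩ := exists_emb_eq rfl ht
  rw [← hj'] at hr ⊢
  rw [rkD_emb] at hr
  exact congrArg _ (Fin.ext hr)

lemma eq_emb_of_rkU {t : Fin k} (ht : t ∈ USet e f) {j : Fin (USet e f).card}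
    (hr : rkU e f t = (USet e f).card - 1 - (j : ℕ)) :
    t = (USet e f).orderEmbOfFin rfl j := by
  obtain ⟨j', hj'⟩ := exists_emb_eq rfl ht
  rw [← hj'] at hr ⊢
  rw [rkU_emb] at hr
  have h1 : (j' : ℕ) < (USet e f).card := j'.isLt
  have h2 : (j : ℕ) < (USet e f).card := j.isLt
  exact congrArg _ (Fin.ext (by omega))

lemma dstep (d u cnt : ℕ) (vv : ℕ → ℝ) (hd : d < (DSet e f).card)
    (hcnt : n ≤ cnt + d + 1) :
    Reach (dlist n n cnt vv) (cfgS e f d u) (cfgS e f (d + 1) u) := by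
  set ts : Fin k := (DSet e f).orderEmbOfFin rfl ⟨d, hd⟩ with hts
  have htD : ts ∈ DSet e f := Finset.orderEmbOfFin_mem _ _ _
  have hrk : rkD e f ts = d := rkD_emb e f ⟨d, hd⟩
  have htU : ts ∉ USet e f := fun h => not_DU e f htD h
  have hP : ¬ ((ts ∈ DSet e f ∧ rkD e f ts < d) ∨ (ts ∈ USet e f ∧ rkU e f ts < u)) := by
    rintro (⟨_, h⟩ | ⟨h, _⟩)
    · omega
    · exact htU h
  have hcfgt : cfg e f d u ts = e ts := by rw [cfg, if_neg hP]
  have hb : f ts < e ts := (mem_DSet e f).mp htD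
  have hfd : d ≤ (f ts : ℕ) := by
    have h1 : d ≤ (ts : ℕ) := le_val_strictMono ((DSet e f).orderEmbOfFin rfl).strictMono ⟨d, hd⟩
    have h2 : (ts : ℕ) ≤ (f ts : ℕ) := le_val_strictMono f.strictMono ts
    omega
  have hupd : cfg e f (d + 1) u = Function.update (cfg e f d u) ts (f ts) := by
    funext t
    by_cases h : t = ts
    · subst h; rw [Function.update_self, cfg, if_pos (Or.inl ⟨htD, by omega⟩)]
    · rw [Function.update_of_ne h, cfg, cfg]
      congr 1
      apply propext
      constructor
      · rintro (⟨h1, h2⟩ | h3)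
        · refine Or.inl ⟨h1, ?_⟩
          rcases Nat.lt_succ_iff_lt_or_eq.mp h2 with h4 | h4
          · exact h4
          · exact absurd (eq_emb_of_rkD e f h1 (j := ⟨d, hd⟩) h4) h
        · exact Or.inr h3
      · rintro (⟨h1, h2⟩ | h3)
        · exact Or.inl ⟨h1, by omega⟩
        · exact Or.inr h3
  have hlow : ∀ t', t' < ts → cfg e f d u t' < f ts := by
    intro t' hlt
    rw [cfg]
    by_cases hP' : (t' ∈ DSet e f ∧ rkD e f t' < d) ∨ (t' ∈ USet e f ∧ rkU e f t' < u)
    · rw [if_pos hP']; exact f.strictMono hlt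
    · rw [if_neg hP']
      by_cases hD' : t' ∈ DSet e f
      · exact absurd (Or.inl ⟨hD', by have := rkD_strict e f hlt hD'; omega⟩) hP'
      · by_cases hU' : t' ∈ USet e f
        · calc e t' < f t' := (mem_USet e f).mp hU'
          _ < f ts := f.strictMono hlt
        · rw [nonmover_eq e f hD' hU']; exact f.strictMono hlt
  have hset : cfgS e f (d + 1) u = insert (f ts) ((cfgS e f d u).erase (e ts)) := by
    rw [cfgS, hupd, image_update_univ (cfg_inj e f d u) ts (f ts), hcfgt]
    rfl
  rw [hset]
  apply slide_down vv cnt n vv (cfgS e f d u) (e ts) (f ts) hb.le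
    (by omega) (by omega)
  · rw [← hcfgt]
    exact Finset.mem_image_of_mem _ (Finset.mem_univ ts)
  · intro y h1 h2 hy
    obtain ⟨t', _, ht'⟩ := Finset.mem_image.mp hy
    rcases lt_trichotomy t' ts with h | h | h
    · have := hlow t' h
      rw [ht'] at this
      exact absurd (lt_of_le_of_lt h1 this) (lt_irrefl _)
    · rw [h, hcfgt] at ht'
      rw [ht'] at h2
      exact absurd h2 (lt_irrefl _)
    · have := cfg_mono e f d u h
      rw [hcfgt, ht'] at this
      exact absurd (h2.trans this) (lt_irrefl _)

lemma ustep (d u lo cnt : ℕ) (vv : ℕ → ℝ) (hu : u < (USet e f).card)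
    (hlo : lo + u ≤ (USet e f).card + 1) (hcnt : n + 1 ≤ lo + cnt) :
    Reach (ulist n lo cnt vv) (cfgS e f d u) (cfgS e f d (u + 1)) := by
  have hj : (USet e f).card - 1 - u < (USet e f).card := by omega
  set ts : Fin k := (USet e f).orderEmbOfFin rfl ⟨(USet e f).card - 1 - u, hj⟩ with hts
  have htU : ts ∈ USet e f := Finset.orderEmbOfFin_mem _ _ _
  have hrk : rkU e f ts = u := by
    have := rkU_emb e f ⟨(USet e f).card - 1 - u, hj⟩
    rw [← hts] at this
    rw [this]
    show (USet e f).card - 1 - ((USet e f).card - 1 - u) = u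
    omega
  have htD : ts ∉ DSet e f := fun h => not_DU e f h htU
  have hP : ¬ ((ts ∈ DSet e f ∧ rkD e f ts < d) ∨ (ts ∈ USet e f ∧ rkU e f ts < u)) := by
    rintro (⟨h, _⟩ | ⟨_, h⟩)
    · exact htD h
    · omega
  have hcfgt : cfg e f d u ts = e ts := by rw [cfg, if_neg hP]
  have hb : e ts < f ts := (mem_USet e f).mp htU
  have hea : (USet e f).card - 1 - u ≤ (e ts : ℕ) := by
    have h1 : (USet e f).card - 1 - u ≤ (ts : ℕ) :=
      le_val_strictMono ((USet e f).orderEmbOfFin rfl).strictMono ⟨(USet e f).card - 1 - u, hj⟩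
    have h2 : (ts : ℕ) ≤ (e ts : ℕ) := le_val_strictMono e.strictMono ts
    omega
  have hupd : cfg e f d (u + 1) = Function.update (cfg e f d u) ts (f ts) := by
    funext t
    by_cases h : t = ts
    · subst h; rw [Function.update_self, cfg, if_pos (Or.inr ⟨htU, by omega⟩)]
    · rw [Function.update_of_ne h, cfg, cfg]
      congr 1
      apply propext
      constructor
      · rintro (h3 | ⟨h1, h2⟩)
        · exact Or.inl h3
        · refine Or.inr ⟨h1, ?_⟩
          rcases Nat.lt_succ_iff_lt_or_eq.mp h2 with h4 | h4
          · exact h4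
          · exact absurd (eq_emb_of_rkU e f h1
              (j := ⟨(USet e f).card - 1 - u, hj⟩) (by rw [h4]; show u = (USet e f).card - 1 - ((USet e f).card - 1 - u); omega)) h
      · rintro (h3 | ⟨h1, h2⟩)
        · exact Or.inl h3
        · exact Or.inr ⟨h1, by omega⟩
  have hhigh : ∀ t', ts < t' → f ts < cfg e f d u t' := by
    intro t' hlt
    rw [cfg]
    by_cases hP' : (t' ∈ DSet e f ∧ rkD e f t' < d) ∨ (t' ∈ USet e f ∧ rkU e f t' < u)
    · rw [if_pos hP']; exact f.strictMono hlt
    · rw [if_neg hP']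
      by_cases hU' : t' ∈ USet e f
      · exact absurd (Or.inr ⟨hU', by have := rkU_strict e f hlt hU'; omega⟩) hP'
      · by_cases hD' : t' ∈ DSet e f
        · calc f ts < f t' := f.strictMono hlt
          _ < e t' := (mem_DSet e f).mp hD'
        · rw [nonmover_eq e f hD' hU']; exact f.strictMono hlt
  have hset : cfgS e f d (u + 1) = insert (f ts) ((cfgS e f d u).erase (e ts)) := by
    rw [cfgS, hupd, image_update_univ (cfg_inj e f d u) ts (f ts), hcfgt]
    rfl
  rw [hset]
  apply slide_up vv cnt lo vv (cfgS e f d u) (e ts) (f ts) hb.le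
    (by omega) (by have := (f ts).isLt; omega)
  · rw [← hcfgt]
    exact Finset.mem_image_of_mem _ (Finset.mem_univ ts)
  · intro y h1 h2 hy
    obtain ⟨t', _, ht'⟩ := Finset.mem_image.mp hy
    rcases lt_trichotomy t' ts with h | h | h
    · have := cfg_mono e f d u h
      rw [hcfgt, ht'] at this
      exact absurd (h1.trans this) (lt_irrefl _)
    · rw [h, hcfgt] at ht'
      rw [ht'] at h1
      exact absurd h1 (lt_irrefl _)
    · have := hhigh t' h
      rw [ht'] at this
      exact absurd (lt_of_le_of_lt h2 this) (lt_irrefl _)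

end Sched2

/-! ### Sweep lists and phases -/

def sweeps (n : ℕ) (ℓ : ℕ → ℕ → ℝ) (off c : ℕ) : List (List (Atom n)) :=
  (List.range c).map fun t => dlist n n (n - (t + off + 2) + 1) (ℓ (t + off))

lemma sweeps_cons (ℓ : ℕ → ℕ → ℝ) (off c : ℕ) :
    sweeps n ℓ off (c + 1)
      = dlist n n (n - (off + 2) + 1) (ℓ off) :: sweeps n ℓ (off + 1) c := by
  rw [sweeps, sweeps, List.range_succ_eq_map, List.map_cons, List.map_map]
  congr 1
  · simp
  · apply List.map_congr_left
    intro j _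
    simp only [Function.comp_apply, Nat.succ_eq_add_one]
    rw [show j + 1 + off = j + (off + 1) from by omega]

def rsweeps (n : ℕ) (ℓ : ℕ → ℕ → ℝ) (c : ℕ) : List (List (Atom n)) :=
  (List.range c).map fun t' => flipw (dlist n n (n - ((c - 1 - t') + 2) + 1) (ℓ (c - 1 - t')))

lemma flipw_append (w₁ w₂ : List (Atom n)) : flipw (w₁ ++ w₂) = flipw w₂ ++ flipw w₁ := by
  simp [flipw]

lemma flipw_flatten (l : List (List (Atom n))) :
    flipw l.flatten = ((l.map flipw).reverse).flatten := by
  induction l with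
  | nil => simp [flipw]
  | cons a l ih =>
    rw [List.flatten_cons, flipw_append, ih, List.map_cons, List.reverse_cons,
      List.flatten_append]
    simp

lemma rsweeps_eq (ℓ : ℕ → ℕ → ℝ) (c : ℕ) :
    ((sweeps n ℓ 0 c).map flipw).reverse = rsweeps n ℓ c := by
  apply List.ext_getElem
  · simp [sweeps, rsweeps]
  · intro j h₁ h₂
    have hj : j < c := by simpa [rsweeps] using h₂
    simp only [List.getElem_reverse, List.length_map, sweeps, rsweeps, List.length_range,
      List.getElem_map, List.getElem_range, Nat.add_zero]

lemma rsweeps_cons (ℓ : ℕ → ℕ → ℝ) (c : ℕ) :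
    rsweeps n ℓ (c + 1)
      = flipw (dlist n n (n - (c + 2) + 1) (ℓ c)) :: rsweeps n ℓ c := by
  rw [rsweeps, rsweeps, List.range_succ_eq_map, List.map_cons, List.map_map]
  congr 1
  · apply List.map_congr_left
    intro j hj
    rw [List.mem_range] at hj
    show flipw (dlist n n (n - ((c + 1 - 1 - (j+1)) + 2) + 1) (ℓ (c + 1 - 1 - (j+1)))) = _
    have h : c + 1 - 1 - (j + 1) = c - 1 - j := by omega
    rw [h]

section Phases

variable {k : ℕ} (e f : Fin k ↪o Fin n) (ℓ : ℕ → ℕ → ℝ)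

lemma dphase (u : ℕ) : ∀ (c off d : ℕ), (off ≤ d ∨ (DSet e f).card ≤ d) →
    off + c + 1 ≤ n →
    Reach (sweeps n ℓ off c).flatten (cfgS e f d u)
      (cfgS e f (min (DSet e f).card (d + c)) u) := by
  intro c
  induction c with
  | zero =>
    intro off d hd hbound
    have : cfgS e f (min (DSet e f).card (d + 0)) u = cfgS e f d u := by
      rcases le_or_gt d (DSet e f).card with h | h
      · rw [Nat.add_zero, min_eq_right h]
      · rw [Nat.add_zero, min_eq_left h.le, cfgS, cfgS, cfg_clampD e f d u h.le]
    rw [this]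
    exact Reach.refl _ _
  | succ c ih =>
    intro off d hd hbound
    rw [sweeps_cons, List.flatten_cons]
    by_cases hdc : d < (DSet e f).card
    · have hoff : off ≤ d := by
        rcases hd with h | h
        · exact h
        · omega
      have h1 : Reach (dlist n n (n - (off + 2) + 1) (ℓ off)) (cfgS e f d u)
          (cfgS e f (d + 1) u) :=
        dstep e f d u _ _ hdc (by omega)
      have h2 := ih (off + 1) (d + 1) (Or.inl (by omega)) (by omega)
      have h3 : min (DSet e f).card (d + 1 + c) = min (DSet e f).card (d + (c + 1)) := by
        congr 1
        omega
      rw [h3] at h2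
      exact Reach.append h1 h2
    · have h2 := ih (off + 1) d (Or.inr (by omega)) (by omega)
      have h3 : min (DSet e f).card (d + c) = min (DSet e f).card (d + (c + 1)) := by
        rw [min_eq_left (by omega), min_eq_left (by omega)]
      rw [h3] at h2
      exact Reach.append (Reach.refl _ _) h2

lemma uphase (d : ℕ) : ∀ (c u : ℕ), c + 1 ≤ n → u ≤ (USet e f).card →
    Reach (rsweeps n ℓ c).flatten (cfgS e f d u)
      (cfgS e f d (u + min c ((USet e f).card - u))) := by
  intro c
  induction c with
  | zero =>
    intro u _ _
    have : u + min 0 ((USet e f).card - u) = u := by omega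
    rw [this]
    exact Reach.refl _ _
  | succ c ih =>
    intro u hc hu
    rw [rsweeps_cons, List.flatten_cons]
    have hcn : c + 2 ≤ n := hc
    have hflip : flipw (dlist n n (n - (c + 2) + 1) (ℓ c))
        = ulist n (c + 2) (n - (c + 2) + 1)
            (fun j => ℓ c ((n - (c + 2) + 1) - 1 - j)) := by
      rw [flipw_dlist _ _ (by omega)]
      congr 1
      omega
    by_cases hfire : c + 1 + u ≤ (USet e f).card
    · have h1 : Reach (flipw (dlist n n (n - (c + 2) + 1) (ℓ c))) (cfgS e f d u)
          (cfgS e f d (u + 1)) := by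
        rw [hflip]
        exact ustep e f d u (c + 2) (n - (c + 2) + 1) _ (by omega) (by omega) (by omega)
      have h2 := ih (u + 1) (by omega) (by omega)
      have h3 : u + 1 + min c ((USet e f).card - (u + 1))
          = u + min (c + 1) ((USet e f).card - u) := by
        rw [min_eq_left (by omega), min_eq_left (by omega)]
        omega
      rw [h3] at h2
      exact Reach.append h1 h2
    · have h2 := ih u (by omega) hu
      have h3 : u + min c ((USet e f).card - u)
          = u + min (c + 1) ((USet e f).card - u) := by
        rw [min_eq_right (by omega), min_eq_right (by omega)]
      rw [h3] at h2
      exact Reach.append (Reach.refl _ _) h2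

end Phases

def dwordL (n s : ℕ) (ℓ : ℕ → ℕ → ℝ) : List (Atom n) := (sweeps n ℓ 0 (s - 1)).flatten

def roundw (n s : ℕ) (ℓ : ℕ → ℕ → ℝ) (dd : Fin n → ℝ) : List (Atom n) :=
  dwordL n s ℓ ++ ([Atom.dg dd] ++ flipw (dwordL n s ℓ))

def bigwd (n s : ℕ) (ℓ : ℕ → ℕ → ℝ) (dd : Fin n → ℝ) (r : ℕ) : List (Atom n) :=
  (List.replicate r (roundw n s ℓ dd)).flatten

lemma flipw_dwordL (s : ℕ) (ℓ : ℕ → ℕ → ℝ) :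
    flipw (dwordL n s ℓ) = (rsweeps n ℓ (s - 1)).flatten := by
  rw [dwordL, flipw_flatten, rsweeps_eq]

section Rounds

variable {k : ℕ} (e f : Fin k ↪o Fin n) (ℓ : ℕ → ℕ → ℝ) (dd : Fin n → ℝ) {s : ℕ}

lemma round_reach (d u : ℕ) (hu : u ≤ (USet e f).card) (hs : 2 ≤ s) (hsn : s ≤ n) :
    Reach (roundw n s ℓ dd) (cfgS e f d u)
      (cfgS e f (min (DSet e f).card (d + (s - 1))) (u + min (s - 1) ((USet e f).card - u))) := by
  apply Reach.append (dphase e f ℓ u (s - 1) 0 d (Or.inl (Nat.zero_le d)) (by omega))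
  apply Reach.append (Reach.refl [Atom.dg dd] _)
  rw [flipw_dwordL]
  exact uphase e f ℓ _ (s - 1) u (by omega) hu

lemma rounds_reach (hs : 2 ≤ s) (hsn : s ≤ n) :
    ∀ (r d u : ℕ), d ≤ (DSet e f).card → u ≤ (USet e f).card →
    Reach (bigwd n s ℓ dd r) (cfgS e f d u)
      (cfgS e f (min (DSet e f).card (d + r * (s - 1)))
        (min (USet e f).card (u + r * (s - 1)))) := by
  intro r
  induction r with
  | zero =>
    intro d u hd hu
    have h1 : min (DSet e f).card (d + 0 * (s - 1)) = d := by
      rw [Nat.zero_mul, Nat.add_zero]; omega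
    have h2 : min (USet e f).card (u + 0 * (s - 1)) = u := by
      rw [Nat.zero_mul, Nat.add_zero]; omega
    rw [h1, h2]
    exact Reach.refl _ _
  | succ r ih =>
    intro d u hd hu
    rw [bigwd, List.replicate_succ, List.flatten_cons]
    apply Reach.append (round_reach e f ℓ dd d u hu hs hsn)
    have h1 := ih (min (DSet e f).card (d + (s - 1))) (u + min (s - 1) ((USet e f).card - u))
      (by omega) (by omega)
    have h2 : min (DSet e f).card (min (DSet e f).card (d + (s - 1)) + r * (s - 1))
        = min (DSet e f).card (d + (r + 1) * (s - 1)) := by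
      rw [Nat.succ_mul]
      omega
    have h3 : min (USet e f).card (u + min (s - 1) ((USet e f).card - u) + r * (s - 1))
        = min (USet e f).card (u + (r + 1) * (s - 1)) := by
      rw [Nat.succ_mul]
      omega
    rw [h2, h3] at h1
    exact h1

lemma Dcard_le (hn : 1 ≤ n) : (DSet e f).card ≤ n - 1 := by
  rw [← Finset.card_image_of_injective (DSet e f) f.injective]
  have h2 : Finset.image ⇑f (DSet e f) ⊆ Finset.Iio ⟨n - 1, by omega⟩ := by
    intro y hy
    obtain ⟨t, ht, rfl⟩ := Finset.mem_image.mp hy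
    have h3 := Fin.lt_def.mp ((mem_DSet e f).mp ht)
    have h4 := (e t).isLt
    rw [Finset.mem_Iio]
    exact Fin.lt_def.mpr (by show (f t : ℕ) < n - 1; omega)
  calc (Finset.image ⇑f (DSet e f)).card ≤ _ := Finset.card_le_card h2
  _ = n - 1 := by rw [Fin.card_Iio]

lemma Ucard_le (hn : 1 ≤ n) : (USet e f).card ≤ n - 1 := by
  rw [← Finset.card_image_of_injective (USet e f) e.injective]
  have h2 : Finset.image ⇑e (USet e f) ⊆ Finset.Iio ⟨n - 1, by omega⟩ := by
    intro y hy
    obtain ⟨t, ht, rfl⟩ := Finset.mem_image.mp hy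
    have h3 := Fin.lt_def.mp ((mem_USet e f).mp ht)
    have h4 := (f t).isLt
    rw [Finset.mem_Iio]
    exact Fin.lt_def.mpr (by show (e t : ℕ) < n - 1; omega)
  calc (Finset.image ⇑e (USet e f)).card ≤ _ := Finset.card_le_card h2
  _ = n - 1 := by rw [Fin.card_Iio]

end Rounds

lemma image_emb_eq {k : ℕ} {S : Finset (Fin n)} (hS : S.card = k) :
    Finset.image ⇑(S.orderEmbOfFin hS) Finset.univ = S := by
  apply Finset.eq_of_subset_of_card_le
  · intro x hx
    obtain ⟨t, _, rfl⟩ := Finset.mem_image.mp hx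
    exact Finset.orderEmbOfFin_mem _ _ _
  · rw [Finset.card_image_of_injective _ (S.orderEmbOfFin hS).injective, Finset.card_univ,
      Fintype.card_fin]
    omega

lemma reach_all {s : ℕ} (ℓ : ℕ → ℕ → ℝ) (dd : Fin n → ℝ) (hn : 2 ≤ n) (hs : 2 ≤ s)
    (hsn : s ≤ n) (r : ℕ) (hr : n - 1 ≤ r * (s - 1)) (S T : Finset (Fin n))
    (hST : S.card = T.card) : Reach (bigwd n s ℓ dd r) S T := by
  have hTc : T.card = S.card := hST.symm
  set e := S.orderEmbOfFin rfl with he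
  set f := T.orderEmbOfFin hTc with hf
  have h0 : cfgS e f 0 0 = S := by rw [cfgS, cfg_zero, he, image_emb_eq]
  have h1 := rounds_reach e f ℓ dd hs hsn r 0 0 (Nat.zero_le _) (Nat.zero_le _)
  have hD := Dcard_le e f (by omega)
  have hU := Ucard_le e f (by omega)
  have h2 : min (DSet e f).card (0 + r * (s - 1)) = (DSet e f).card := by omega
  have h3 : min (USet e f).card (0 + r * (s - 1)) = (USet e f).card := by omega
  rw [h0, h2, h3] at h1
  have h4 : cfgS e f (DSet e f).card (USet e f).card = T := by
    rw [cfgS, cfg_done e f _ _ le_rfl le_rfl, hf, image_emb_eq]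
  rw [h4] at h1
  exact h1

/-! ### Lower bound: gap potential -/

def gapset (g : Fin n) : Finset (Fin n) := Finset.univ.erase g

lemma mem_gapset {g x : Fin n} : x ∈ gapset g ↔ x ≠ g := by
  simp [gapset]

lemma not_mem_gapset {g x : Fin n} (h : x ∉ gapset g) : x = g := by
  by_contra hc
  exact h (mem_gapset.mpr hc)

lemma gapset_card (g : Fin n) : (gapset g).card = n - 1 := by
  rw [gapset, Finset.card_erase_of_mem (Finset.mem_univ g), Finset.card_univ, Fintype.card_fin]

lemma gapset_inj {g g' : Fin n} (h : gapset g = gapset g') : g = g' := by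
  by_contra hc
  have h1 : g ∈ gapset g' := mem_gapset.mpr hc
  rw [← h] at h1
  exact (mem_gapset.mp h1) rfl

lemma gapset_move {g x y : Fin n} (hxg : x = g) (hyg : y ≠ g) :
    insert x ((gapset g).erase y) = gapset y := by
  subst hxg
  ext z
  simp only [Finset.mem_insert, Finset.mem_erase, mem_gapset]
  constructor
  · rintro (rfl | ⟨h1, h2⟩)
    · exact fun hh => hyg hh.symm
    · exact h1
  · intro hz
    by_cases h : z = x
    · exact Or.inl h
    · exact Or.inr ⟨hz, h⟩

lemma gap_dsweep (vv : ℕ → ℝ) : ∀ (cnt m : ℕ) (vv' : ℕ → ℝ) (g : Fin n) (T : Finset (Fin n)),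
    Reach (dlist n m cnt vv') (gapset g) T →
    ∃ g' : Fin n, T = gapset g' ∧ (g' = g ∨ ((g' : ℕ) = (g : ℕ) + 1 ∧ (g : ℕ) + 2 ≤ m)) := by
  intro cnt
  induction cnt with
  | zero =>
    intro m vv' g T h
    cases h
    exact ⟨g, rfl, Or.inl rfl⟩
  | succ cnt ih =>
    intro m vv' g T h
    rw [dlist_cons] at h
    cases h with
    | skip _ h' =>
      obtain ⟨g', hT, hor⟩ := ih (m - 1) _ g T h'
      refine ⟨g', hT, ?_⟩
      rcases hor with h1 | ⟨h1, h2⟩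
      · exact Or.inl h1
      · exact Or.inr ⟨h1, by omega⟩
    | low x₀ x₁ h₀ h₁ hm hn h' =>
      have hx₁ : x₁ = g := not_mem_gapset hn
      have hx₀g : x₀ ≠ g := by
        intro hh
        rw [hh, ← hx₁] at h₀
        omega
      rw [gapset_move hx₁ hx₀g] at h'
      obtain ⟨g', hT, hor⟩ := ih (m - 1) _ x₀ T h'
      have hval : (x₀ : ℕ) = (g : ℕ) + 1 := by
        have : (x₁ : ℕ) = (g : ℕ) := by rw [hx₁]
        omega
      refine ⟨g', hT, ?_⟩
      rcases hor with h1 | ⟨h1, h2⟩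
      · exact Or.inr ⟨by rw [h1]; omega, by omega⟩
      · omega

def IsUp : Atom n → Prop
  | .low _ _ => False
  | _ => True

lemma gap_upword : ∀ (w : List (Atom n)) (_ : ∀ a ∈ w, IsUp a) (g : Fin n) (T : Finset (Fin n)),
    Reach w (gapset g) T → ∃ g' : Fin n, T = gapset g' ∧ (g' : ℕ) ≤ (g : ℕ) := by
  intro w
  induction w with
  | nil =>
    intro _ g T h
    cases h
    exact ⟨g, rfl, le_rfl⟩
  | cons a w ih =>
    intro hw g T h
    have hw' : ∀ a ∈ w, IsUp a := fun b hb => hw b (List.mem_cons_of_mem _ hb)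
    cases a with
    | low i q => exact absurd (hw _ (List.mem_cons_self)) (by simp [IsUp])
    | dg d =>
      cases h with
      | skip _ h' => exact ih hw' g T h'
    | up i q =>
      cases h with
      | skip _ h' => exact ih hw' g T h'
      | up x₀ x₁ h₀ h₁ hm hn h' =>
        have hx₀ : x₀ = g := not_mem_gapset hn
        have hx₁g : x₁ ≠ g := by
          intro hh
          rw [hh, ← hx₀] at h₁
          omega
        rw [gapset_move hx₀ hx₁g] at h'
        obtain ⟨g', hT, hle⟩ := ih hw' x₁ T h'
        have hval : (x₁ : ℕ) + 1 = (g : ℕ) := by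
          have : (x₀ : ℕ) = (g : ℕ) := by rw [hx₀]
          omega
        exact ⟨g', hT, by omega⟩

lemma gap_dphase (ℓ : ℕ → ℕ → ℝ) : ∀ (c off : ℕ) (g : Fin n) (T : Finset (Fin n)),
    Reach (sweeps n ℓ off c).flatten (gapset g) T →
    ∃ g' : Fin n, T = gapset g' ∧ (g' : ℕ) ≤ (g : ℕ) + c := by
  intro c
  induction c with
  | zero =>
    intro off g T h
    cases h
    exact ⟨g, rfl, by omega⟩
  | succ c ih =>
    intro off g T h
    rw [sweeps_cons, List.flatten_cons] at h
    obtain ⟨M, h1, h2⟩ := Reach.append_inv h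
    obtain ⟨g1, hM, hor⟩ := gap_dsweep (ℓ off) _ _ _ g M h1
    rw [hM] at h2
    obtain ⟨g', hT, hle⟩ := ih (off + 1) g1 T h2
    refine ⟨g', hT, ?_⟩
    rcases hor with h3 | ⟨h3, _⟩
    · rw [h3] at hle; omega
    · omega

lemma dwordL_low (s : ℕ) (ℓ : ℕ → ℕ → ℝ) :
    ∀ a ∈ dwordL n s ℓ, ∃ i q, a = Atom.low i q := by
  intro a ha
  rw [dwordL] at ha
  obtain ⟨l, hl, hal⟩ := List.mem_flatten.mp ha
  rw [sweeps] at hl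
  obtain ⟨t, _, rfl⟩ := List.mem_map.mp hl
  rw [dlist] at hal
  obtain ⟨j, _, rfl⟩ := List.mem_map.mp hal
  exact ⟨_, _, rfl⟩

lemma upword_suffix (s : ℕ) (ℓ : ℕ → ℕ → ℝ) (dd : Fin n → ℝ) :
    ∀ a ∈ ([Atom.dg dd] ++ flipw (dwordL n s ℓ)), IsUp a := by
  intro a ha
  rcases List.mem_append.mp ha with h | h
  · rw [List.mem_singleton] at h
    subst h
    simp [IsUp]
  · rw [flipw, List.mem_reverse] at h
    obtain ⟨b, hb, rfl⟩ := List.mem_map.mp h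
    obtain ⟨i, q, rfl⟩ := dwordL_low s ℓ b hb
    simp [IsUp, Atom.flip]

lemma gap_round {s : ℕ} (ℓ : ℕ → ℕ → ℝ) (dd : Fin n → ℝ) (g : Fin n) (T : Finset (Fin n))
    (h : Reach (roundw n s ℓ dd) (gapset g) T) :
    ∃ g' : Fin n, T = gapset g' ∧ (g' : ℕ) ≤ (g : ℕ) + (s - 1) := by
  rw [roundw] at h
  obtain ⟨M, h1, h2⟩ := Reach.append_inv h
  obtain ⟨g1, hM, hle1⟩ := gap_dphase ℓ (s - 1) 0 g M h1
  rw [hM] at h2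
  obtain ⟨g', hT, hle2⟩ := gap_upword _ (upword_suffix s ℓ dd) g1 T h2
  exact ⟨g', hT, by omega⟩

lemma gap_bigwd {s : ℕ} (ℓ : ℕ → ℕ → ℝ) (dd : Fin n → ℝ) :
    ∀ (r : ℕ) (g : Fin n) (T : Finset (Fin n)),
    Reach (bigwd n s ℓ dd r) (gapset g) T →
    ∃ g' : Fin n, T = gapset g' ∧ (g' : ℕ) ≤ (g : ℕ) + r * (s - 1) := by
  intro r
  induction r with
  | zero =>
    intro g T h
    cases h
    exact ⟨g, rfl, by omega⟩
  | succ r ih =>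
    intro g T h
    rw [bigwd, List.replicate_succ, List.flatten_cons] at h
    obtain ⟨M, h1, h2⟩ := Reach.append_inv h
    obtain ⟨g1, hM, hle1⟩ := gap_round ℓ dd g M h1
    rw [hM] at h2
    obtain ⟨g', hT, hle2⟩ := ih g1 T h2
    refine ⟨g', hT, ?_⟩
    have : (r + 1) * (s - 1) = (s - 1) + r * (s - 1) := by rw [Nat.succ_mul]; omega
    omega

lemma not_reach_witness {s : ℕ} (ℓ : ℕ → ℕ → ℝ) (dd : Fin n → ℝ) (hn : 2 ≤ n) (r : ℕ)
    (hr : r * (s - 1) < n - 1) :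
    ¬ Reach (bigwd n s ℓ dd r) (gapset ⟨0, by omega⟩) (gapset ⟨n - 1, by omega⟩) := by
  intro h
  obtain ⟨g', hT, hle⟩ := gap_bigwd ℓ dd r _ _ h
  have heq := gapset_inj hT
  have h1 : (g' : ℕ) = n - 1 := by rw [← heq]
  have h0 : (((⟨0, by omega⟩ : Fin n)) : ℕ) = 0 := rfl
  rw [h0] at hle
  omega

/-! ### Assembly -/

section Assemble

variable {s : ℕ} (ℓ : ℕ → ℕ → ℝ) (dd : Fin n → ℝ)

lemma posword_dwordL (hs : 2 ≤ s) (hsn : s ≤ n)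
    (hℓ : ∀ t, t < s - 1 → ∀ j, j ≤ n - (t + 2) → 0 < ℓ t j) :
    PosWord (dwordL n s ℓ) := by
  intro a ha
  rw [dwordL] at ha
  obtain ⟨l, hl, hal⟩ := List.mem_flatten.mp ha
  rw [sweeps] at hl
  obtain ⟨t, ht, rfl⟩ := List.mem_map.mp hl
  rw [List.mem_range] at ht
  rw [dlist] at hal
  obtain ⟨j, hj, rfl⟩ := List.mem_map.mp hal
  rw [List.mem_range] at hj
  exact ⟨hℓ (t + 0) (by omega) j (by omega), by omega, by omega⟩

lemma posword_roundw (hs : 2 ≤ s) (hsn : s ≤ n)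
    (hℓ : ∀ t, t < s - 1 → ∀ j, j ≤ n - (t + 2) → 0 < ℓ t j) (hdd : ∀ i, 0 < dd i) :
    PosWord (roundw n s ℓ dd) := by
  apply posword_append (posword_dwordL ℓ hs hsn hℓ)
  apply posword_append
  · intro a ha
    rw [List.mem_singleton] at ha
    subst ha
    exact hdd
  · exact posword_flipw (posword_dwordL ℓ hs hsn hℓ)

lemma posword_bigwd (hs : 2 ≤ s) (hsn : s ≤ n)
    (hℓ : ∀ t, t < s - 1 → ∀ j, j ≤ n - (t + 2) → 0 < ℓ t j) (hdd : ∀ i, 0 < dd i)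
    (r : ℕ) : PosWord (bigwd n s ℓ dd r) := by
  intro a ha
  rw [bigwd] at ha
  obtain ⟨l, hl, hal⟩ := List.mem_flatten.mp ha
  rw [List.mem_replicate] at hl
  rw [hl.2] at hal
  exact posword_roundw ℓ dd hs hsn hℓ hdd a hal

lemma map_wprod_sweeps :
    (sweeps n ℓ 0 (s - 1)).map wprod
      = List.ofFn fun t : Fin (s - 1) => Wmat n (t.1 + 2) (ℓ t.1) := by
  apply List.ext_getElem
  · simp [sweeps]
  · intro j h1 h2
    simp only [sweeps, List.getElem_map, List.getElem_range, List.getElem_ofFn, Nat.add_zero]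
    exact wprod_dlist_eq_Wmat (j + 2) (ℓ j)

end Assemble

end Osc

open Osc in
/-- For L = W_2(ℓ^2)⋯W_s(ℓ^s) with all multipliers positive and a positive diagonal D,
the matrix A = L·D·Lᵀ is oscillatory with exponent ⌈(n−1)/(s−1)⌉ (here written as
(n−2)/(s−1) + 1 in natural-number arithmetic). -/
theorem stmt18 {n s : ℕ} (hn : 2 ≤ n) (hs : 2 ≤ s) (hsn : s ≤ n)
    (ℓ : ℕ → ℕ → ℝ) (hℓ : ∀ t, t < s - 1 → ∀ j, j ≤ n - (t + 2) → 0 < ℓ t j)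
    (dd : Fin n → ℝ) (hdd : ∀ i, 0 < dd i)
    (L A : Matrix (Fin n) (Fin n) ℝ)
    (hL : L = (List.ofFn fun t : Fin (s - 1) => Wmat n (t.val + 2) (ℓ t.val)).prod)
    (hA : A = L * Matrix.diagonal dd * L.transpose) :
    TotallyNonneg A ∧ (∃ k : ℕ, 0 < k ∧ TotallyPos (A ^ k)) ∧
    IsLeast {r : ℕ | 0 < r ∧ TotallyPos (A ^ r)} ((n - 2) / (s - 1) + 1) := by
  have hLw : wprod (dwordL n s ℓ) = L := by
    rw [hL, dwordL, wprod_flatten, map_wprod_sweeps]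
  have hAw : wprod (roundw n s ℓ dd) = A := by
    rw [roundw, wprod_append, wprod_append, wprod_singleton, wprod_flipw, hLw, hA]
    show L * ((Atom.dg dd).mat * L.transpose) = L * Matrix.diagonal dd * L.transpose
    rw [show (Atom.dg dd).mat = Matrix.diagonal dd from rfl, Matrix.mul_assoc]
  have hpowr : ∀ r : ℕ, A ^ r = wprod (bigwd n s ℓ dd r) := by
    intro r
    induction r with
    | zero => rw [pow_zero, bigwd, List.replicate, List.flatten_nil, wprod_nil]
    | succ r ih =>
      rw [bigwd, List.replicate_succ, List.flatten_cons, wprod_append, hAw,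
        show (List.replicate r (roundw n s ℓ dd)).flatten = bigwd n s ℓ dd r from rfl,
        ← ih, pow_succ']
  have hpw : ∀ r : ℕ, PosWord (bigwd n s ℓ dd r) := posword_bigwd ℓ dd hs hsn hℓ hdd
  set r0 := (n - 2) / (s - 1) + 1 with hr0def
  have hr0big : n - 1 ≤ r0 * (s - 1) := by
    have hdm := Nat.div_add_mod (n - 2) (s - 1)
    have hml : (n - 2) % (s - 1) < s - 1 := Nat.mod_lt _ (by omega)
    have hexp : ((n - 2) / (s - 1) + 1) * (s - 1)
        = (s - 1) * ((n - 2) / (s - 1)) + (s - 1) := by ring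
    rw [hr0def, hexp]
    omega
  have htp : TotallyPos (A ^ r0) := by
    rw [hpowr r0]
    exact tp_of _ (hpw r0) (fun S T hST => reach_all ℓ dd hn hs hsn r0 hr0big S T hST)
  have hnotp : ∀ r : ℕ, r * (s - 1) < n - 1 → ¬ TotallyPos (A ^ r) := by
    intro r hr
    rw [hpowr r]
    exact not_tp _ (hpw r) (gapset ⟨0, by omega⟩) (gapset ⟨n - 1, by omega⟩)
      (gapset_card _) (gapset_card _) (not_reach_witness ℓ dd hn r hr)
  have hr0pos : 0 < r0 := Nat.succ_pos _
  refine ⟨?_, ⟨r0, hr0pos, htp⟩, ⟨⟨hr0pos, htp⟩, ?_⟩⟩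
  · have h := tn_of _ (hpw 1)
    rw [← hpowr 1, pow_one] at h
    exact h
  · intro r hr
    by_contra hlt
    push_neg at hlt
    have h1 : r ≤ (n - 2) / (s - 1) := by omega
    have h2 : r * (s - 1) < n - 1 := by
      have h3 := Nat.div_mul_le_self (n - 2) (s - 1)
      have h4 : r * (s - 1) ≤ ((n - 2) / (s - 1)) * (s - 1) := Nat.mul_le_mul_right _ h1
      omega
    exact hnotp r h2 hr.2
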